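/- arXiv:2604.01217 — 3 statements merged into one kernel-verified Lean document; each statement's English description precedes it below -/
import Mathlib

section
/- For every bipartite quantum channel N: A'B'→AB, the conditional min-entropy satisfies S_∞[A|B]_N ≤ log|A|, and equality S_∞[A|B]_N = log|A| holds if and only if N is a conditional uniformly mixing channel, i.e., N = R^π ⊗ Q for some quantum channel Q: B'→B, where R^π(X) := tr(X)·1_A/|A|; equivalently, if and only if Φ^N = π_{R_A} ⊗ π_A ⊗ Φ^Q with π denoting the maximally mixed state. -/
open scoped ComplexOrder Kronecker
open Matrix

noncomputable section

/-- Square complex matrices indexed by `ι`. -/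
abbrev Mat (ι : Type) : Type := Matrix ι ι ℂ

/-- A quantum state: a positive semidefinite matrix of trace one. -/
def IsState {ι : Type} [Fintype ι] (ρ : Mat ι) : Prop :=
  ρ.PosSemidef ∧ ρ.trace = 1

/-- Max-relative entropy `D_∞(ρ‖σ) = log₂ inf {λ ≥ 0 : λ•σ − ρ ⪰ 0}` as an extended real;
it is `+∞` (`sInf ∅ = ⊤`) when no such `λ` exists. -/
def Dmax {ι : Type} [Fintype ι] (ρ σ : Mat ι) : EReal :=
  sInf {x : EReal | ∃ l : ℝ, 0 ≤ l ∧ ((l : ℂ) • σ - ρ).PosSemidef ∧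
    x = ((Real.logb 2 l : ℝ) : EReal)}

/-- Partial trace over the first tensor factor. -/
def trFst {ιA ιB : Type} [Fintype ιA] (ρ : Matrix (ιA × ιB) (ιA × ιB) ℂ) : Mat ιB :=
  Matrix.of fun i j => ∑ k : ιA, ρ (k, i) (k, j)

/-- Partial trace over the second tensor factor. -/
def trSnd {ιA ιB : Type} [Fintype ιB] (ρ : Matrix (ιA × ιB) (ιA × ιB) ℂ) : Mat ιA :=
  Matrix.of fun i j => ∑ k : ιB, ρ (i, k) (j, k)

/-- Conditional min-entropy `S_∞(A|B)_ρ := −inf over states σ on B of D_∞(ρ‖1_A⊗σ)`. -/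
def condMin {ιA ιB : Type} [Fintype ιA] [DecidableEq ιA] [Fintype ιB]
    (ρ : Matrix (ιA × ιB) (ιA × ιB) ℂ) : EReal :=
  -(⨅ σ : {σ : Mat ιB // IsState σ}, Dmax ρ ((1 : Mat ιA) ⊗ₖ σ.1))

/-- `S↓_∞(A|B)_ρ := −D_∞(ρ‖1_A⊗ρ_B)` with `ρ_B = tr_A ρ`. -/
def condMinDown {ιA ιB : Type} [Fintype ιA] [DecidableEq ιA] [Fintype ιB]
    (ρ : Matrix (ιA × ιB) (ιA × ιB) ℂ) : EReal :=
  -(Dmax ρ ((1 : Mat ιA) ⊗ₖ trFst ρ))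

/-- The (unnormalized) Choi matrix of a linear map of matrices. -/
def choiMatrix {ι κ : Type} [DecidableEq ι] (L : Mat ι →ₗ[ℂ] Mat κ) :
    Matrix (ι × κ) (ι × κ) ℂ :=
  Matrix.of fun p q => L (Matrix.single p.1 q.1 1) p.2 q.2

/-- A quantum channel: a linear map that is completely positive (positive semidefinite Choi
matrix) and trace preserving. -/
def IsChannel {ι κ : Type} [Fintype ι] [DecidableEq ι] [Fintype κ]
    (L : Mat ι →ₗ[ℂ] Mat κ) : Prop :=
  (choiMatrix L).PosSemidef ∧ ∀ X : Mat ι, (L X).trace = X.trace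

/-- The Choi state `Φ^L = (id⊗L)(Φ_d)` of a linear map of matrices. -/
def choiState {ι κ : Type} [Fintype ι] [DecidableEq ι] (L : Mat ι →ₗ[ℂ] Mat κ) :
    Matrix (ι × κ) (ι × κ) ℂ :=
  ((Fintype.card ι : ℂ))⁻¹ • choiMatrix L

/-- The Choi state of a bipartite channel `N : A'B' → AB`, re-indexed across
the cut `R_A A : R_B B`. -/
def biChoiState {ιA' ιB' κA κB : Type} [Fintype ιA'] [DecidableEq ιA']
    [Fintype ιB'] [DecidableEq ιB'] (N : Mat (ιA' × ιB') →ₗ[ℂ] Mat (κA × κB)) :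
    Matrix ((ιA' × κA) × (ιB' × κB)) ((ιA' × κA) × (ιB' × κB)) ℂ :=
  Matrix.of fun p q =>
    choiState N ((p.1.1, p.2.1), (p.1.2, p.2.2)) ((q.1.1, q.2.1), (q.1.2, q.2.2))

/-- Conditional min-entropy of a bipartite channel:
`S_∞[A|B]_N := −inf over channels Q : B'→B of D_∞(Φ^N ‖ 1_{R_A A} ⊗ Φ^Q) − log₂|A'|`. -/
def chanCondMin {ιA' ιB' κA κB : Type}
    [Fintype ιA'] [DecidableEq ιA'] [Fintype ιB'] [DecidableEq ιB']
    [Fintype κA] [DecidableEq κA] [Fintype κB] [DecidableEq κB]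
    (N : Mat (ιA' × ιB') →ₗ[ℂ] Mat (κA × κB)) : EReal :=
  (-(⨅ Q : {Q : Mat ιB' →ₗ[ℂ] Mat κB // IsChannel Q},
      Dmax (biChoiState N) ((1 : Mat (ιA' × κA)) ⊗ₖ choiState Q.1)))
    - ((Real.logb 2 (Fintype.card ιA' : ℝ) : ℝ) : EReal)

/-- Rank-one projector `|v⟩⟨v|` associated with a vector. -/
def outer {ι : Type} (v : ι → ℂ) : Mat ι := Matrix.vecMulVec v (star v)

/-- Vectorization `vec(V) := ∑ i, e_i ⊗ V e_i` of a matrix `V : ℂ^ι → ℂ^κ`. -/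
def vecRect {ι κ : Type} (V : Matrix κ ι ℂ) : ι × κ → ℂ := fun p => V p.2 p.1

/-- A maximally entangled state on `ι1 × ι2`: `|φ⟩⟨φ|` with
`|φ⟩ = (1/√d) ∑ i, e_i ⊗ f_i` for orthonormal families `e`, `f`, `d = min(|ι1|,|ι2|)`. -/
def IsMaxEntangled {ι1 ι2 : Type} [Fintype ι1] [Fintype ι2]
    (Φ : Matrix (ι1 × ι2) (ι1 × ι2) ℂ) : Prop :=
  ∃ (e : Fin (min (Fintype.card ι1) (Fintype.card ι2)) → ι1 → ℂ)
    (f : Fin (min (Fintype.card ι1) (Fintype.card ι2)) → ι2 → ℂ),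
    (∀ i j, ∑ x : ι1, (starRingEnd ℂ) (e i x) * e j x = if i = j then 1 else 0) ∧
    (∀ i j, ∑ x : ι2, (starRingEnd ℂ) (f i x) * f j x = if i = j then 1 else 0) ∧
    Φ = outer (fun p => (((Real.sqrt (min (Fintype.card ι1) (Fintype.card ι2) : ℝ))⁻¹ : ℝ) : ℂ) *
      ∑ i, e i p.1 * f i p.2)

/-- Partial transpose over the second tensor factor. -/
def ptransposeSnd {ιA ιB : Type} (ρ : Matrix (ιA × ιB) (ιA × ιB) ℂ) :
    Matrix (ιA × ιB) (ιA × ιB) ℂ :=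
  Matrix.of fun p q => ρ (p.1, q.2) (q.1, p.2)

/-- A bipartite state is PPT if its partial transpose is positive semidefinite. -/
def IsPPT {ιA ιB : Type} [Fintype ιA] [Fintype ιB]
    (ρ : Matrix (ιA × ιB) (ιA × ιB) ℂ) : Prop :=
  (ptransposeSnd ρ).PosSemidef

/-- Conjugation channel `X ↦ W X Wᴴ`. -/
def conjMap {ι κ : Type} [Fintype ι] (W : Matrix κ ι ℂ) : Mat ι →ₗ[ℂ] Mat κ where
  toFun X := W * X * Wᴴ
  map_add' X Y := by simp [Matrix.mul_add, Matrix.add_mul]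
  map_smul' c X := by simp [Matrix.mul_smul, Matrix.smul_mul]

/-- The controlled unitary matrix `∑ j, |j⟩⟨j| ⊗ U_j`. -/
def ctrlU {n m : ℕ} (U : Fin n → Mat (Fin m)) : Mat (Fin n × Fin m) :=
  Matrix.of fun p q => (if p.1 = q.1 then 1 else 0) * U p.1 p.2 q.2

/-- The replacer channel `X ↦ tr(X) • γ`. -/
def replacer {ι κ : Type} [Fintype ι] (γ : Mat κ) : Mat ι →ₗ[ℂ] Mat κ where
  toFun X := X.trace • γ
  map_add' X Y := by simp [Matrix.trace_add, add_smul]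
  map_smul' c X := by simp [Matrix.trace_smul, mul_smul]

/-- The maximally mixed state `π_m = 1_m / m`. -/
def uniformState (m : ℕ) : Mat (Fin m) := ((m : ℂ))⁻¹ • (1 : Mat (Fin m))

/-- Tensor product of two linear maps of matrices. -/
def tensorL {ι1 κ1 ι2 κ2 : Type} [Fintype ι1] [DecidableEq ι1]
    (L1 : Mat ι1 →ₗ[ℂ] Mat κ1) (L2 : Mat ι2 →ₗ[ℂ] Mat κ2) :
    Mat (ι1 × ι2) →ₗ[ℂ] Mat (κ1 × κ2) where
  toFun X := Matrix.of fun p q =>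
    ∑ i1 : ι1, ∑ j1 : ι1,
      L1 (Matrix.single i1 j1 1) p.1 q.1 *
        L2 (Matrix.of fun i2 j2 => X (i1, i2) (j1, j2)) p.2 q.2
  map_add' X Y := by
    ext p q
    have h : ∀ i1 j1 : ι1,
        (Matrix.of fun i2 j2 => X (i1, i2) (j1, j2) + Y (i1, i2) (j1, j2)) =
          (Matrix.of fun i2 j2 => X (i1, i2) (j1, j2)) +
            (Matrix.of fun i2 j2 => Y (i1, i2) (j1, j2)) := by
      intro i1 j1; ext i2 j2; simp
    simp only [Matrix.add_apply, Matrix.of_apply, h, map_add, mul_add,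
      Finset.sum_add_distrib]
  map_smul' c X := by
    ext p q
    have h : ∀ i1 j1 : ι1,
        (Matrix.of fun i2 j2 => c * X (i1, i2) (j1, j2)) =
          c • (Matrix.of fun i2 j2 => X (i1, i2) (j1, j2)) := by
      intro i1 j1; ext i2 j2; simp
    simp only [Matrix.smul_apply, smul_eq_mul, Matrix.of_apply, RingHom.id_apply, h,
      LinearMap.map_smul]
    rw [Finset.mul_sum]
    refine Finset.sum_congr rfl fun i1 _ => ?_
    rw [Finset.mul_sum]
    refine Finset.sum_congr rfl fun j1 _ => ?_
    ring


/-- Square root of a positive semidefinite matrix (junk value `0` otherwise). -/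
def matSqrt {ι : Type} [Fintype ι] [DecidableEq ι] (M : Mat ι) : Mat ι :=
  letI := Classical.dec M.PosSemidef
  if h : M.PosSemidef then
    (h.1.eigenvectorUnitary : Mat ι) *
      Matrix.diagonal (fun i => ((Real.sqrt (h.1.eigenvalues i) : ℝ) : ℂ)) *
      (star h.1.eigenvectorUnitary : Mat ι)
  else 0

/-- Trace norm `‖X‖₁ = tr √(XᴴX)`. -/
def traceNorm {ι : Type} [Fintype ι] [DecidableEq ι] (X : Mat ι) : ℝ :=
  (matSqrt (Xᴴ * X)).trace.re

/-- Fidelity `F(ρ,σ) = ‖√ρ√σ‖₁²`. -/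
def fidelity {ι : Type} [Fintype ι] [DecidableEq ι] (ρ σ : Mat ι) : ℝ :=
  (traceNorm (matSqrt ρ * matSqrt σ)) ^ 2

/-- Purified distance `P(ρ,σ) = √(1 − F(ρ,σ))`. -/
def purifiedDist {ι : Type} [Fintype ι] [DecidableEq ι] (ρ σ : Mat ι) : ℝ :=
  Real.sqrt (1 - fidelity ρ σ)

/-- Purified channel distance `P[N,M] = sup over states ψ of P((id⊗N)ψ, (id⊗M)ψ)`. -/
def purifiedChannelDist {ι κ : Type} [Fintype ι] [DecidableEq ι] [Fintype κ] [DecidableEq κ]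
    (L1 L2 : Mat ι →ₗ[ℂ] Mat κ) : ℝ :=
  ⨆ ψ : {ψ : Matrix (ι × ι) (ι × ι) ℂ // IsState ψ},
    purifiedDist (tensorL (LinearMap.id : Mat ι →ₗ[ℂ] Mat ι) L1 ψ.1)
      (tensorL (LinearMap.id : Mat ι →ₗ[ℂ] Mat ι) L2 ψ.1)

/-- Diamond norm `‖L‖◊ = sup over states ρ on R⊗in (R ≃ in) of ‖(id⊗L)ρ‖₁`. -/
def diamondNorm {ι κ : Type} [Fintype ι] [DecidableEq ι] [Fintype κ] [DecidableEq κ]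
    (L : Mat ι →ₗ[ℂ] Mat κ) : ℝ :=
  ⨆ ρ : {ρ : Matrix (ι × ι) (ι × ι) ℂ // IsState ρ},
    traceNorm (tensorL (LinearMap.id : Mat ι →ₗ[ℂ] Mat ι) L ρ.1)

/-- `−log₂ t`, as an extended real which is `+∞` for `t ≤ 0`. -/
def negLogE (t : ℝ) : EReal := if t ≤ 0 then ⊤ else ((-Real.logb 2 t : ℝ) : EReal)

/-- Hypothesis-testing relative entropy
`D_H^ε(ρ‖σ) = −log₂ inf{tr(Λσ) : 0 ≤ Λ ≤ 1, tr(Λρ) ≥ 1−ε}`. -/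
def DH {ι : Type} [Fintype ι] [DecidableEq ι] (ε : ℝ) (ρ σ : Mat ι) : EReal :=
  negLogE (sInf {t : ℝ | ∃ Λ : Mat ι, Λ.PosSemidef ∧ ((1 : Mat ι) - Λ).PosSemidef ∧
    1 - ε ≤ ((Λ * ρ).trace).re ∧ t = ((Λ * σ).trace).re})

/-- Channel hypothesis-testing relative entropy
`D_H^ε[N‖M] = sup over states ψ of D_H^ε((id⊗N)ψ‖(id⊗M)ψ)`. -/
def DHchan {ι κ : Type} [Fintype ι] [DecidableEq ι] [Fintype κ] [DecidableEq κ]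
    (ε : ℝ) (L1 L2 : Mat ι →ₗ[ℂ] Mat κ) : EReal :=
  ⨆ ψ : {ψ : Matrix (ι × ι) (ι × ι) ℂ // IsState ψ},
    DH ε (tensorL (LinearMap.id : Mat ι →ₗ[ℂ] Mat ι) L1 ψ.1)
      (tensorL (LinearMap.id : Mat ι →ₗ[ℂ] Mat ι) L2 ψ.1)

/-- Channel max-relative entropy `D_∞[N‖M] = D_∞(Φ^N‖Φ^M)`. -/
def DmaxChan {ι κ : Type} [Fintype ι] [DecidableEq ι] [Fintype κ]
    (L1 L2 : Mat ι →ₗ[ℂ] Mat κ) : EReal :=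
  Dmax (choiState L1) (choiState L2)

/-- Smoothed channel max-relative entropy
`D_∞^ε[N‖M] = inf{D_∞[Ñ‖M] : Ñ a channel with (1/2)P[N,Ñ] ≤ ε}`. -/
def DmaxChanSmooth {ι κ : Type} [Fintype ι] [DecidableEq ι] [Fintype κ] [DecidableEq κ]
    (ε : ℝ) (L1 L2 : Mat ι →ₗ[ℂ] Mat κ) : EReal :=
  ⨅ Nt : {Nt : Mat ι →ₗ[ℂ] Mat κ //
      IsChannel Nt ∧ 2⁻¹ * purifiedChannelDist L1 Nt ≤ ε},
    DmaxChan Nt.1 L2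

/-- A quantum superchannel: `Θ(N) = post ∘ (id_E ⊗ N) ∘ pre` for channels `pre`, `post`
and a finite-dimensional memory `E`. -/
structure Superchannel (ι1 κ1 ι2 κ2 : Type) [Fintype ι1] [DecidableEq ι1]
    [Fintype κ1] [DecidableEq κ1] [Fintype ι2] [DecidableEq ι2]
    [Fintype κ2] [DecidableEq κ2] where
  e : ℕ
  pre : Mat ι2 →ₗ[ℂ] Mat (Fin e × ι1)
  post : Mat (Fin e × κ1) →ₗ[ℂ] Mat κ2
  pre_channel : IsChannel pre
  post_channel : IsChannel post

/-- Action of a superchannel on a linear map. -/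
def Superchannel.apply {ι1 κ1 ι2 κ2 : Type} [Fintype ι1] [DecidableEq ι1]
    [Fintype κ1] [DecidableEq κ1] [Fintype ι2] [DecidableEq ι2]
    [Fintype κ2] [DecidableEq κ2] (Θ : Superchannel ι1 κ1 ι2 κ2)
    (L : Mat ι1 →ₗ[ℂ] Mat κ1) : Mat ι2 →ₗ[ℂ] Mat κ2 :=
  Θ.post ∘ₗ (tensorL (LinearMap.id : Mat (Fin Θ.e) →ₗ[ℂ] Mat (Fin Θ.e)) L) ∘ₗ Θ.pre


/-- A conditional Gibbs-preserving superchannel (distillation direction): it maps every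
conditionally thermalizing channel `T^β ⊗ Q̃` to a conditionally uniformly mixing channel
`R^π_m ⊗ Q̃'` for some side channel `Q̃'`. -/
def IsCGPSdist {a' b' a b m d' d : ℕ} (γ : Mat (Fin a))
    (Θ : Superchannel (Fin a' × Fin b') (Fin a × Fin b) (Fin m × Fin d') (Fin m × Fin d)) :
    Prop :=
  ∀ Qt : Mat (Fin b') →ₗ[ℂ] Mat (Fin b), IsChannel Qt →
    ∃ Qt' : Mat (Fin d') →ₗ[ℂ] Mat (Fin d), IsChannel Qt' ∧
      Θ.apply (tensorL (replacer γ) Qt) = tensorL (replacer (uniformState m)) Qt'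

/-- A conditional Gibbs-preserving superchannel (formation direction): it maps every
conditionally uniformly mixing channel `R^π_m ⊗ Q̃` to a conditionally thermalizing channel
`T^β ⊗ Q̃'` for some side channel `Q̃'`. -/
def IsCGPScost {a' b' a b m d' d : ℕ} (γ : Mat (Fin a))
    (Θ : Superchannel (Fin m × Fin d') (Fin m × Fin d) (Fin a' × Fin b') (Fin a × Fin b)) :
    Prop :=
  ∀ Qt : Mat (Fin d') →ₗ[ℂ] Mat (Fin d), IsChannel Qt →
    ∃ Qt' : Mat (Fin b') →ₗ[ℂ] Mat (Fin b), IsChannel Qt' ∧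
      Θ.apply (tensorL (replacer (uniformState m)) Qt) = tensorL (replacer γ) Qt'

/-- One-shot conditional athermality distillation yield `Dist^{(1,ε)}(N, T^β)`:
the worst case over side channels `Q` of the largest `log₂ m` such that some conditional
Gibbs-preserving superchannel converts `(N, T^β⊗Q)` into `(id_m⊗Q', R^π_m⊗Q')`
within purified channel distance `ε`. -/
def DistOneShot {a' b' a b : ℕ} (N : Mat (Fin a' × Fin b') →ₗ[ℂ] Mat (Fin a × Fin b))
    (γ : Mat (Fin a)) (ε : ℝ) : EReal :=
  ⨅ Q : {Q : Mat (Fin b') →ₗ[ℂ] Mat (Fin b) // IsChannel Q},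
    sSup {x : EReal | ∃ m d' d : ℕ, ∃ Q' : Mat (Fin d') →ₗ[ℂ] Mat (Fin d),
      ∃ Θ : Superchannel (Fin a' × Fin b') (Fin a × Fin b) (Fin m × Fin d') (Fin m × Fin d),
        IsChannel Q' ∧ IsCGPSdist γ Θ ∧
        Θ.apply (tensorL (replacer γ) Q.1) = tensorL (replacer (uniformState m)) Q' ∧
        purifiedChannelDist
          (tensorL (LinearMap.id : Mat (Fin m) →ₗ[ℂ] Mat (Fin m)) Q') (Θ.apply N) ≤ ε ∧
        x = ((Real.logb 2 (m : ℝ) : ℝ) : EReal)}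

/-- One-shot conditional athermality formation cost `Cost^{(1,ε)}(N, T^β)`:
the best case over side channels `Q` of the least `log₂ m` such that some conditional
Gibbs-preserving superchannel converts `(id_m⊗Q'', R^π_m⊗Q'')` into `(N, T^β⊗Q)`
within purified channel distance `ε`. -/
def CostOneShot {a' b' a b : ℕ} (N : Mat (Fin a' × Fin b') →ₗ[ℂ] Mat (Fin a × Fin b))
    (γ : Mat (Fin a)) (ε : ℝ) : EReal :=
  ⨅ Q : {Q : Mat (Fin b') →ₗ[ℂ] Mat (Fin b) // IsChannel Q},
    sInf {x : EReal | ∃ m d' d : ℕ, ∃ Q'' : Mat (Fin d') →ₗ[ℂ] Mat (Fin d),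
      ∃ Θ : Superchannel (Fin m × Fin d') (Fin m × Fin d) (Fin a' × Fin b') (Fin a × Fin b),
        IsChannel Q'' ∧ IsCGPScost γ Θ ∧
        Θ.apply (tensorL (replacer (uniformState m)) Q'') = tensorL (replacer γ) Q.1 ∧
        purifiedChannelDist N
          (Θ.apply (tensorL (LinearMap.id : Mat (Fin m) →ₗ[ℂ] Mat (Fin m)) Q'')) ≤ ε ∧
        x = ((Real.logb 2 (m : ℝ) : ℝ) : EReal)}


/-- A bipartite channel `N : A'B' → AB` is no-signaling (semicausal) from `A'` to `B`:
`tr_A ∘ N = tr_{A'} ⊗ Q` for some channel `Q : B' → B`. -/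
def NoSignalFstToSnd {ιA' ιB' κA κB : Type} [Fintype ιA'] [DecidableEq ιA']
    [Fintype ιB'] [DecidableEq ιB'] [Fintype κA] [Fintype κB]
    (N : Mat (ιA' × ιB') →ₗ[ℂ] Mat (κA × κB)) : Prop :=
  ∃ Q : Mat ιB' →ₗ[ℂ] Mat κB, IsChannel Q ∧
    ∀ X : Mat (ιA' × ιB'), trFst (N X) = Q (trFst X)



set_option linter.unusedSectionVars false

namespace StateProof

open Matrix

variable {ι κ : Type} [Fintype ι] [DecidableEq ι] [Fintype κ] [DecidableEq κ]

lemma posSemidef_smul_real {M : Mat ι} (hM : M.PosSemidef) {r : ℝ} (hr : 0 ≤ r) :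
    ((r : ℂ) • M).PosSemidef := by
  refine Matrix.PosSemidef.of_dotProduct_mulVec_nonneg ?_ ?_
  · show ((r:ℂ) • M)ᴴ = _
    rw [Matrix.conjTranspose_smul, hM.1]
    congr 1
    simp
  · intro x
    rw [Matrix.smul_mulVec, dotProduct_smul]
    have hz := hM.dotProduct_mulVec_nonneg x
    rw [Complex.nonneg_iff] at hz ⊢
    constructor
    · simp only [smul_eq_mul, Complex.mul_re, Complex.ofReal_re, Complex.ofReal_im, zero_mul,
        sub_zero]
      exact mul_nonneg hr hz.1
    · simp only [smul_eq_mul, Complex.mul_im, Complex.ofReal_re, Complex.ofReal_im, zero_mul,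
        add_zero, ← hz.2, mul_zero]

lemma psd_diag_nonneg {M : Mat ι} (h : M.PosSemidef) (i : ι) : 0 ≤ M i i := by
  have h2 := h.dotProduct_mulVec_nonneg (Pi.single i 1)
  simpa [dotProduct, Matrix.mulVec, Pi.single_apply, Finset.mul_sum, ite_mul, mul_ite,
    apply_ite] using h2

lemma psd_trace_nonneg {M : Mat ι} (h : M.PosSemidef) : 0 ≤ M.trace := by
  exact Finset.sum_nonneg fun i _ => psd_diag_nonneg h i

lemma psd_trace_zero_eq_zero {M : Mat ι} (h : M.PosSemidef) (ht : M.trace = 0) : M = 0 := by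
  exact h.trace_eq_zero_iff.mp ht

lemma scale_lower {ρ σ : Mat ι} {s l : ℝ} (hs : 0 < s) (hσ : σ.trace = (s : ℂ))
    (hρ : ρ.trace = 1) (hpsd : (((l : ℝ) : ℂ) • σ - ρ).PosSemidef) : s⁻¹ ≤ l := by
  have h1 := psd_trace_nonneg hpsd
  rw [Matrix.trace_sub, Matrix.trace_smul, hσ, hρ] at h1
  have h2 : (0:ℝ) ≤ l * s - 1 := by
    have := (Complex.nonneg_iff.mp h1).1
    simpa [Complex.mul_re] using this
  rw [← one_div, div_le_iff₀ hs]
  linarith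

lemma dmax_ge {ρ σ : Mat ι} {s : ℝ} (hs : 0 < s) (hσ : σ.trace = (s : ℂ))
    (hρ : ρ.trace = 1) : ((-Real.logb 2 s : ℝ) : EReal) ≤ Dmax ρ σ := by
  refine le_sInf ?_
  rintro x ⟨l, hl0, hpsd, rfl⟩
  have hls : s⁻¹ ≤ l := scale_lower hs hσ hρ hpsd
  have hlpos : 0 < l := lt_of_lt_of_le (inv_pos.mpr hs) hls
  have hlog : -Real.logb 2 s ≤ Real.logb 2 l := by
    rw [← Real.logb_inv]
    exact (Real.logb_le_logb one_lt_two (inv_pos.mpr hs) hlpos).mpr hls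
  exact_mod_cast hlog

lemma dmax_le {ρ σ : Mat ι} {l : ℝ} (hl0 : 0 ≤ l) (hpsd : (((l:ℝ) : ℂ) • σ - ρ).PosSemidef) :
    Dmax ρ σ ≤ ((Real.logb 2 l : ℝ) : EReal) :=
  sInf_le ⟨l, hl0, hpsd, rfl⟩

end StateProof

namespace StateProof

section BatchB

variable {ι κ : Type} [Fintype ι] [DecidableEq ι] [Fintype κ] [DecidableEq κ]

lemma trace_stdBasisMatrix (i j : ι) :
    (Matrix.single i j (1:ℂ)).trace = if i = j then 1 else 0 := by
  simp only [Matrix.trace, Matrix.diag, Matrix.single, Matrix.of_apply]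
  rcases eq_or_ne i j with rfl | h
  · simp
  · simp only [if_neg h]
    refine Finset.sum_eq_zero fun k _ => ?_
    simp only [ite_eq_right_iff, and_imp]
    intro h1 h2
    exact absurd (h1.trans h2.symm) h

lemma trace_choiMatrix (L : Mat ι →ₗ[ℂ] Mat κ) (hL : ∀ X : Mat ι, (L X).trace = X.trace) :
    (choiMatrix L).trace = (Fintype.card ι : ℂ) := by
  have : (choiMatrix L).trace = ∑ i : ι, ∑ k : κ, L (Matrix.single i i 1) k k := by
    simp only [Matrix.trace, Matrix.diag, choiMatrix, Matrix.of_apply]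
    rw [Fintype.sum_prod_type]
  rw [this]
  have h2 : ∀ i : ι, ∑ k : κ, L (Matrix.single i i 1) k k = 1 := by
    intro i
    have : ∑ k : κ, L (Matrix.single i i 1) k k
        = (L (Matrix.single i i 1)).trace := rfl
    rw [this, hL, trace_stdBasisMatrix]
    simp
  simp [h2]

lemma trace_choiState [Nonempty ι] (L : Mat ι →ₗ[ℂ] Mat κ)
    (hL : ∀ X : Mat ι, (L X).trace = X.trace) : (choiState L).trace = 1 := by
  unfold choiState
  rw [Matrix.trace_smul, trace_choiMatrix L hL, smul_eq_mul, inv_mul_cancel₀]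
  exact_mod_cast Fintype.card_ne_zero

lemma choiState_posSemidef {L : Mat ι →ₗ[ℂ] Mat κ} (h : (choiMatrix L).PosSemidef) :
    (choiState L).PosSemidef := by
  unfold choiState
  have hc : ((Fintype.card ι : ℂ))⁻¹ = (((Fintype.card ι : ℝ)⁻¹ : ℝ) : ℂ) := by push_cast; ring
  rw [hc]
  exact posSemidef_smul_real h (by positivity)

lemma trSnd_choiState (L : Mat ι →ₗ[ℂ] Mat κ) (hL : ∀ X : Mat ι, (L X).trace = X.trace) :
    trSnd (choiState L) = ((Fintype.card ι : ℂ))⁻¹ • (1 : Mat ι) := by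
  ext i j
  simp only [trSnd, choiState, choiMatrix, Matrix.of_apply, Matrix.smul_apply,
    Matrix.one_apply, smul_eq_mul]
  rw [← Finset.mul_sum]
  congr 1
  have : ∑ k : κ, L (Matrix.single i j 1) k k
      = (L (Matrix.single i j 1)).trace := rfl
  rw [this, hL, trace_stdBasisMatrix]

lemma kron_one_psd {J : Mat κ} (hJ : J.PosSemidef) : ((1 : Mat ι) ⊗ₖ J).PosSemidef := by
  refine Matrix.PosSemidef.of_dotProduct_mulVec_nonneg ?_ ?_
  · show ((1 : Mat ι) ⊗ₖ J)ᴴ = _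
    ext p q
    obtain ⟨i, k⟩ := p; obtain ⟨j, l⟩ := q
    simp only [Matrix.conjTranspose_apply, Matrix.kroneckerMap_apply, Matrix.one_apply,
      star_mul', apply_ite, star_one, star_zero]
    have hJh : star (J l k) = J k l := by
      conv_rhs => rw [← hJ.1]
      rfl
    rw [hJh]
    by_cases hij : i = j
    · subst hij; simp
    · simp [hij, Ne.symm hij]
  · intro x
    have key : star x ⬝ᵥ ((1 : Mat ι) ⊗ₖ J).mulVec x
        = ∑ i : ι, star (fun k => x (i,k)) ⬝ᵥ J.mulVec (fun k => x (i,k)) := by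
      simp only [dotProduct, Matrix.mulVec, Matrix.kroneckerMap_apply, Matrix.one_apply,
        Pi.star_apply, Fintype.sum_prod_type, ite_mul, one_mul, zero_mul]
      refine Finset.sum_congr rfl fun i _ => Finset.sum_congr rfl fun k _ => ?_
      rw [Finset.sum_eq_single i]
      · simp
      · intro b _ hb
        simp [if_neg (fun hh => hb hh.symm : ¬ i = b)]
      · simp
    rw [key]
    exact Finset.sum_nonneg fun i _ => hJ.dotProduct_mulVec_nonneg _

end BatchB

section BatchC

variable {ιA' ιB' κA κB : Type} [Fintype ιA'] [DecidableEq ιA'] [Fintype ιB'] [DecidableEq ιB']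
  [Fintype κA] [DecidableEq κA] [Fintype κB] [DecidableEq κB]

def reidx (ιA' ιB' κA κB : Type) : ((ιA' × κA) × (ιB' × κB)) ≃ ((ιA' × ιB') × (κA × κB)) where
  toFun p := ((p.1.1, p.2.1), (p.1.2, p.2.2))
  invFun q := ((q.1.1, q.2.1), (q.1.2, q.2.2))
  left_inv p := rfl
  right_inv q := rfl

lemma biChoiState_eq_submatrix (N : Mat (ιA' × ιB') →ₗ[ℂ] Mat (κA × κB)) :
    biChoiState N = (choiState N).submatrix (reidx ιA' ιB' κA κB) (reidx ιA' ιB' κA κB) :=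
  rfl

lemma biChoiState_posSemidef {N : Mat (ιA' × ιB') →ₗ[ℂ] Mat (κA × κB)}
    (h : (choiMatrix N).PosSemidef) : (biChoiState N).PosSemidef := by
  rw [biChoiState_eq_submatrix]
  exact (choiState_posSemidef h).submatrix _

lemma trace_biChoiState (N : Mat (ιA' × ιB') →ₗ[ℂ] Mat (κA × κB)) :
    (biChoiState N).trace = (choiState N).trace := by
  rw [biChoiState_eq_submatrix]
  simp only [Matrix.trace, Matrix.diag, Matrix.submatrix_apply]
  exact Equiv.sum_comp (reidx ιA' ιB' κA κB) fun q => choiState N q q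

end BatchC

end StateProof

namespace StateProof

section BatchD

variable {ι κ : Type} [Fintype ι] [DecidableEq ι] [Fintype κ] [DecidableEq κ]

lemma sum_collapse (i j : ι) (f : ι → ι → ℂ) :
    (∑ p : ι, ∑ q : ι, if i = p ∧ j = q then f p q else 0) = f i j := by
  rw [Finset.sum_eq_single i]
  · rw [Finset.sum_eq_single j]
    · simp
    · intro c _ hc
      rw [if_neg (fun hh : i = i ∧ j = c => hc hh.2.symm)]
    · simp
  · intro c _ hc
    exact Finset.sum_eq_zero fun q _ => by
      rw [if_neg (fun hh : i = c ∧ j = q => hc hh.1.symm)]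
  · simp

lemma sum_collapse' (i j : ι) (f : ι → ι → ℂ) :
    (∑ p : ι, ∑ q : ι, if p = i ∧ q = j then f p q else 0) = f i j := by
  have : ∀ p q : ι, (if p = i ∧ q = j then f p q else 0) = (if i = p ∧ j = q then f p q else 0) := by
    intro p q
    congr 1
    simp [eq_comm]
  simp only [this]
  exact sum_collapse i j f

lemma tensorL_apply_std {ι1 κ1 ι2 κ2 : Type} [Fintype ι1] [DecidableEq ι1]
    [Fintype ι2] [DecidableEq ι2]
    (L1 : Mat ι1 →ₗ[ℂ] Mat κ1) (L2 : Mat ι2 →ₗ[ℂ] Mat κ2)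
    (i1 j1 : ι1) (i2 j2 : ι2) (k1 l1 : κ1) (k2 l2 : κ2) :
    tensorL L1 L2 (Matrix.single (i1,i2) (j1,j2) 1) (k1,k2) (l1,l2)
      = L1 (Matrix.single i1 j1 1) k1 l1 * L2 (Matrix.single i2 j2 1) k2 l2 := by
  have hinner : ∀ p1 q1 : ι1,
      (Matrix.of fun i2' j2' => Matrix.single (i1,i2) (j1,j2) (1:ℂ) (p1,i2') (q1,j2'))
        = if p1 = i1 ∧ q1 = j1 then Matrix.single i2 j2 1 else 0 := by
    intro p1 q1
    by_cases h : p1 = i1 ∧ q1 = j1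
    · obtain ⟨rfl, rfl⟩ := h
      rw [if_pos ⟨rfl, rfl⟩]
      ext i2' j2'
      simp [Matrix.single, Prod.ext_iff, and_assoc, and_left_comm]
    · rw [if_neg h]
      ext i2' j2'
      simp only [Matrix.of_apply, Matrix.zero_apply, Matrix.single, Prod.ext_iff,
        ite_eq_right_iff, one_ne_zero]
      rintro ⟨⟨h1, -⟩, ⟨h2, -⟩⟩
      exact (h ⟨h1.symm, h2.symm⟩).elim
  show (∑ p1 : ι1, ∑ q1 : ι1, L1 (Matrix.single p1 q1 1) k1 l1 *
      (L2 (Matrix.of fun i2' j2' =>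
        Matrix.single (i1,i2) (j1,j2) (1:ℂ) (p1,i2') (q1,j2'))) k2 l2) = _
  simp only [hinner, apply_ite L2, map_zero]
  have hterm : ∀ p1 q1 : ι1,
      L1 (Matrix.single p1 q1 1) k1 l1 *
        (if p1 = i1 ∧ q1 = j1 then L2 (Matrix.single i2 j2 1) else 0) k2 l2
      = if p1 = i1 ∧ q1 = j1 then
          L1 (Matrix.single p1 q1 1) k1 l1 * L2 (Matrix.single i2 j2 1) k2 l2
        else 0 := by
    intro p1 q1
    by_cases h : p1 = i1 ∧ q1 = j1 <;> simp [h]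
  simp only [hterm]
  rw [sum_collapse']

def mkChan {ιB' κB : Type} [Fintype ιB'] [DecidableEq ιB'] [Fintype κB]
    (J : Mat (ιB' × κB)) : Mat ιB' →ₗ[ℂ] Mat κB where
  toFun X := Matrix.of fun k l =>
    (Fintype.card ιB' : ℂ) * ∑ i : ιB', ∑ j : ιB', X i j * J (i,k) (j,l)
  map_add' X Y := by
    ext k l
    simp [Matrix.add_apply, add_mul, Finset.sum_add_distrib, mul_add]
  map_smul' c X := by
    have hpull : ∀ (d : ℂ) (f : ιB' → ιB' → ℂ),
        d * ∑ i : ιB', ∑ j : ιB', f i j = ∑ i : ιB', ∑ j : ιB', d * f i j := by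
      intro d f
      rw [Finset.mul_sum]
      exact Finset.sum_congr rfl fun i _ => Finset.mul_sum _ _ _
    ext k l
    simp only [Matrix.of_apply, Matrix.smul_apply, smul_eq_mul, RingHom.id_apply]
    rw [hpull, hpull, hpull]
    exact Finset.sum_congr rfl fun i _ => Finset.sum_congr rfl fun j _ => by ring

lemma choiMatrix_mkChan {ιB' κB : Type} [Fintype ιB'] [DecidableEq ιB'] [Fintype κB]
    (J : Mat (ιB' × κB)) :
    choiMatrix (mkChan J) = (Fintype.card ιB' : ℂ) • J := by
  ext p q
  obtain ⟨i, k⟩ := p; obtain ⟨j, l⟩ := q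
  show (Fintype.card ιB' : ℂ) * (∑ i' : ιB', ∑ j' : ιB',
    Matrix.single i j (1:ℂ) i' j' * J (i',k) (j',l)) = _
  have : ∀ i' j' : ιB', Matrix.single i j (1:ℂ) i' j' * J (i',k) (j',l)
      = if i = i' ∧ j = j' then J (i',k) (j',l) else 0 := by
    intro i' j'
    simp [Matrix.single, ite_mul]
  simp only [this]
  rw [sum_collapse i j (fun i' j' => J (i',k) (j',l))]
  simp

lemma choiState_mkChan {ιB' κB : Type} [Fintype ιB'] [DecidableEq ιB'] [Fintype κB]
    [Nonempty ιB'] (J : Mat (ιB' × κB)) : choiState (mkChan J) = J := by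
  unfold choiState
  rw [choiMatrix_mkChan, smul_smul, inv_mul_cancel₀, one_smul]
  exact_mod_cast Fintype.card_ne_zero

lemma mkChan_isChannel {ιB' κB : Type} [Fintype ιB'] [DecidableEq ιB'] [Fintype κB]
    [DecidableEq κB] [Nonempty ιB'] {J : Mat (ιB' × κB)} (hJ : J.PosSemidef)
    (htr : trSnd J = ((Fintype.card ιB' : ℂ))⁻¹ • (1 : Mat ιB')) :
    IsChannel (mkChan J) := by
  have hcard0 : ((Fintype.card ιB' : ℂ)) ≠ 0 := by exact_mod_cast Fintype.card_ne_zero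
  constructor
  · rw [choiMatrix_mkChan]
    have hc : ((Fintype.card ιB' : ℂ)) = (((Fintype.card ιB' : ℝ) : ℝ) : ℂ) := by push_cast; ring
    rw [hc]
    exact posSemidef_smul_real hJ (by positivity)
  · intro X
    have hpull : ∀ (d : ℂ) (f : ιB' → ιB' → ℂ),
        d * ∑ i : ιB', ∑ j : ιB', f i j = ∑ i : ιB', ∑ j : ιB', d * f i j := by
      intro d f
      rw [Finset.mul_sum]
      exact Finset.sum_congr rfl fun i _ => Finset.mul_sum _ _ _
    show (∑ k : κB, (Fintype.card ιB' : ℂ) * ∑ i : ιB', ∑ j : ιB', X i j * J (i,k) (j,k)) = _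
    rw [← Finset.mul_sum, Finset.sum_comm]
    have h1 : ∀ i : ιB', (∑ k : κB, ∑ j : ιB', X i j * J (i,k) (j,k))
        = ∑ j : ιB', X i j * trSnd J i j := by
      intro i
      rw [Finset.sum_comm]
      refine Finset.sum_congr rfl fun j _ => ?_
      rw [← Finset.mul_sum]
      rfl
    simp only [h1, htr]
    have h2 : ∀ i : ιB', (∑ j : ιB', X i j *
        (((Fintype.card ιB' : ℂ))⁻¹ • (1 : Mat ιB')) i j)
        = X i i * ((Fintype.card ιB' : ℂ))⁻¹ := by
      intro i
      simp [Matrix.smul_apply, Matrix.one_apply, mul_ite, Finset.sum_ite_eq, smul_eq_mul]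
    simp only [h2]
    rw [← Finset.sum_mul, mul_comm, mul_assoc, inv_mul_cancel₀ hcard0, mul_one]
    rfl

lemma linearMap_ext_of_choi {L1 L2 : Mat ι →ₗ[ℂ] Mat κ}
    (h : choiMatrix L1 = choiMatrix L2) : L1 = L2 := by
  have hstd : ∀ i j, L1 (Matrix.single i j 1) = L2 (Matrix.single i j 1) := by
    intro i j
    ext k l
    have h2 : ∀ p q, choiMatrix L1 p q = choiMatrix L2 p q := fun p q => by rw [h]
    exact h2 (i,k) (j,l)
  apply LinearMap.ext
  intro X
  conv_lhs => rw [Matrix.matrix_eq_sum_single X]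
  conv_rhs => rw [Matrix.matrix_eq_sum_single X]
  rw [map_sum, map_sum]
  refine Finset.sum_congr rfl fun i _ => ?_
  rw [map_sum, map_sum]
  refine Finset.sum_congr rfl fun j _ => ?_
  have : Matrix.single i j (X i j) = X i j • Matrix.single i j 1 := by
    rw [Matrix.smul_single]
    simp
  rw [this, L1.map_smul, L2.map_smul, hstd]

end BatchD

end StateProof

namespace StateProof

section BatchE

variable {a' b' a b : ℕ} [NeZero a'] [NeZero b'] [NeZero a] [NeZero b]

lemma biChoi_tensor_replacer (Q : Mat (Fin b') →ₗ[ℂ] Mat (Fin b)) :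
    biChoiState (tensorL (replacer (uniformState a)) Q)
      = ((((a' : ℝ) * a)⁻¹ : ℝ) : ℂ) • ((1 : Mat (Fin a' × Fin a)) ⊗ₖ choiState Q) := by
  ext p q
  obtain ⟨⟨i1, k1⟩, ⟨i2, k2⟩⟩ := p
  obtain ⟨⟨j1, l1⟩, ⟨j2, l2⟩⟩ := q
  show choiState (tensorL (replacer (uniformState a)) Q)
      ((i1,i2),(k1,k2)) ((j1,j2),(l1,l2)) = _
  unfold choiState
  rw [Matrix.smul_apply]
  have hentry : choiMatrix (tensorL (replacer (uniformState a)) Q)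
      ((i1,i2),(k1,k2)) ((j1,j2),(l1,l2))
      = (replacer (uniformState a)) (Matrix.single i1 j1 1) k1 l1 *
        Q (Matrix.single i2 j2 1) k2 l2 := by
    show tensorL (replacer (uniformState a)) Q
      (Matrix.single (i1,i2) (j1,j2) 1) (k1,k2) (l1,l2) = _
    exact tensorL_apply_std _ _ _ _ _ _ _ _ _ _
  rw [hentry]
  have hrep : (replacer (uniformState a)) (Matrix.single i1 j1 1) k1 l1
      = (if i1 = j1 then 1 else 0) * ((a:ℂ))⁻¹ * (if k1 = l1 then 1 else 0) := by
    show ((Matrix.single i1 j1 (1:ℂ)).trace • uniformState a) k1 l1 = _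
    rw [Matrix.smul_apply, trace_stdBasisMatrix]
    unfold uniformState
    rw [Matrix.smul_apply, Matrix.one_apply]
    simp [mul_assoc]
  rw [hrep]
  have hkron : ((1 : Mat (Fin a' × Fin a)) ⊗ₖ
      (((Fintype.card (Fin b') : ℂ))⁻¹ • choiMatrix Q)) ((i1,k1),(i2,k2)) ((j1,l1),(j2,l2))
      = (if i1 = j1 then 1 else 0) * (if k1 = l1 then 1 else 0) *
        (((b':ℂ))⁻¹ * choiMatrix Q (i2,k2) (j2,l2)) := by
    show (1 : Mat (Fin a' × Fin a)) (i1,k1) (j1,l1) *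
        ((((Fintype.card (Fin b') : ℂ))⁻¹ • choiMatrix Q) (i2,k2) (j2,l2)) = _
    rw [Matrix.one_apply, Matrix.smul_apply]
    simp only [Fintype.card_fin, smul_eq_mul]
    by_cases h1 : i1 = j1 <;> by_cases h2 : k1 = l1 <;>
      simp [h1, h2, Prod.ext_iff]
  rw [Matrix.smul_apply, hkron]
  have hQ : Q (Matrix.single i2 j2 1) k2 l2 = choiMatrix Q (i2,k2) (j2,l2) := rfl
  rw [hQ]
  have hcard : (Fintype.card (Fin a' × Fin b') : ℂ) = (a' : ℂ) * (b' : ℂ) := by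
    simp [Fintype.card_prod]
  rw [hcard]
  have hca : ((((a' : ℝ) * a)⁻¹ : ℝ) : ℂ) = ((a':ℂ) * (a:ℂ))⁻¹ := by
    push_cast
    ring
  rw [hca]
  simp only [smul_eq_mul, mul_inv]
  ring

lemma eq_of_biChoi {N M : Mat (Fin a' × Fin b') →ₗ[ℂ] Mat (Fin a × Fin b)}
    (h : biChoiState N = biChoiState M) : N = M := by
  have hcs : choiState N = choiState M := by
    have h2 : ∀ p q, biChoiState N p q = biChoiState M p q := fun p q => by rw [h]
    ext p q
    obtain ⟨⟨i1, i2⟩, ⟨k1, k2⟩⟩ := p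
    obtain ⟨⟨j1, j2⟩, ⟨l1, l2⟩⟩ := q
    exact h2 ((i1,k1),(i2,k2)) ((j1,l1),(j2,l2))
  apply linearMap_ext_of_choi
  have hcard : ((Fintype.card (Fin a' × Fin b') : ℂ))⁻¹ ≠ 0 := by
    rw [ne_eq, inv_eq_zero]
    exact_mod_cast Fintype.card_ne_zero
  unfold choiState at hcs
  exact smul_right_injective _ hcard hcs

end BatchE

end StateProof

namespace StateProof

section Topo

variable {ι : Type} [Fintype ι] [DecidableEq ι]

lemma isClosed_nonneg : IsClosed {z : ℂ | 0 ≤ z} := by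
  have h : {z : ℂ | 0 ≤ z} = Complex.re ⁻¹' (Set.Ici 0) ∩ Complex.im ⁻¹' {0} := by
    ext z
    simp [Complex.nonneg_iff, eq_comm]
  rw [h]
  exact (isClosed_Ici.preimage Complex.continuous_re).inter
    (isClosed_singleton.preimage Complex.continuous_im)

lemma isClosed_psd : IsClosed {M : Mat ι | M.PosSemidef} := by
  have h1 : {M : Mat ι | M.PosSemidef}
      = {M : Mat ι | Mᴴ = M} ∩ ⋂ x : ι → ℂ, {M : Mat ι | 0 ≤ star x ⬝ᵥ M.mulVec x} := by
    ext M
    simp only [Set.mem_setOf_eq, Set.mem_inter_iff, Set.mem_iInter]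
    exact Matrix.posSemidef_iff_dotProduct_mulVec
  rw [h1]
  refine IsClosed.inter (isClosed_eq ?_ continuous_id) (isClosed_iInter fun x => ?_)
  · exact continuous_id.matrix_conjTranspose
  · exact isClosed_nonneg.preimage
      (continuous_const.dotProduct (continuous_id.matrix_mulVec continuous_const))

lemma isCompact_box (r : ℝ) :
    IsCompact {M : Mat ι | ∀ p q, M p q ∈ Metric.closedBall (0:ℂ) r} := by
  have h : {M : Mat ι | ∀ p q, M p q ∈ Metric.closedBall (0:ℂ) r}
      = Set.univ.pi fun _ : ι => Set.univ.pi fun _ : ι => Metric.closedBall (0:ℂ) r := by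
    ext M
    exact ⟨fun hM => Set.mem_pi.mpr fun p _ => Set.mem_pi.mpr fun q _ => hM p q,
      fun hM p q => Set.mem_pi.mp (Set.mem_pi.mp hM p (Set.mem_univ p)) q (Set.mem_univ q)⟩
  rw [h]
  exact isCompact_univ_pi fun _ => isCompact_univ_pi fun _ => isCompact_closedBall 0 r

lemma psd_entry_bound {M : Mat ι} (hM : M.PosSemidef) {t : ℝ} (ht : 0 ≤ t)
    (hdiag : ∀ p, (M p p).re ≤ t) (p q : ι) : ‖M p q‖ ≤ 2 * t := by
  rcases eq_or_ne p q with rfl | hpq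
  · have h0 := psd_diag_nonneg hM p
    rw [Complex.nonneg_iff] at h0
    have hre : M p p = ((M p p).re : ℂ) := by
      apply Complex.ext
      · simp
      · simp [← h0.2]
    rw [hre, Complex.norm_real, Real.norm_eq_abs, abs_of_nonneg h0.1]
    nlinarith [hdiag p]
  · have hqp : M q p = star (M p q) := by
      conv_lhs => rw [← hM.1]
      rfl
    have key : ∀ θ : ℂ, ‖θ‖ = 1 →
        0 ≤ (M p p).re + 2 * (θ * M p q).re + (M q q).re := by
      intro θ hθ
      have hθθ : star θ * θ = 1 := by
        rw [Complex.star_def, mul_comm, Complex.mul_conj]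
        rw [Complex.normSq_eq_norm_sq, hθ]
        norm_num
      have h2 := hM.dotProduct_mulVec_nonneg ((Pi.single p (1:ℂ) + Pi.single q θ : ι → ℂ))
      have hmv : M.mulVec ((Pi.single p (1:ℂ) + Pi.single q θ : ι → ℂ)) =
          fun u => M u p * 1 + M u q * θ := by
        funext u
        rw [Matrix.mulVec_add]
        simp [Matrix.mulVec_single, mul_comm]
      have hstar : star ((Pi.single p (1:ℂ) + Pi.single q θ : ι → ℂ))
          = ((Pi.single p (1:ℂ) + Pi.single q (star θ) : ι → ℂ)) := by
        funext u
        rcases eq_or_ne u p with rfl | hup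
        · simp [Pi.single_apply, hpq, Ne.symm hpq]
        · rcases eq_or_ne u q with rfl | huq
          · simp [Pi.single_apply, Ne.symm hpq, hup, Ne.symm hup]
          · simp [Pi.single_apply, Ne.symm hup, Ne.symm huq]
      rw [hmv, hstar, add_dotProduct, single_dotProduct,
        single_dotProduct] at h2
      have hform : (1:ℂ) * (M p p * 1 + M p q * θ) + star θ * (M q p * 1 + M q q * θ)
          = M p p + (θ * M p q + star (θ * M p q)) + M q q := by
        rw [hqp, star_mul']
        have h5 : star θ * (star (M p q) * 1 + M q q * θ)
            = star θ * star (M p q) + (star θ * θ) * M q q := by ring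
        rw [h5, hθθ]
        ring
      rw [hform] at h2
      have h3 := (Complex.nonneg_iff.mp h2).1
      have h4 : (M p p + (θ * M p q + star (θ * M p q)) + M q q).re
          = (M p p).re + 2 * (θ * M p q).re + (M q q).re := by
        simp only [Complex.add_re, Complex.star_def, Complex.conj_re]
        ring
      rw [h4] at h3
      exact h3
    have h1 := key 1 (by simp)
    have h2 := key (-1) (by simp)
    have h3 := key Complex.I (by simp)
    have h4 := key (-Complex.I) (by simp)
    simp only [one_mul, neg_mul, Complex.neg_re, Complex.mul_re, Complex.I_re, Complex.I_im,
      zero_mul, one_mul, zero_sub, neg_neg] at h1 h2 h3 h4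
    have hz1 : |(M p q).re| ≤ t := by
      rw [abs_le]
      constructor
      · nlinarith [hdiag p, hdiag q]
      · nlinarith [hdiag p, hdiag q]
    have hz2 : |(M p q).im| ≤ t := by
      rw [abs_le]
      constructor
      · nlinarith [hdiag p, hdiag q]
      · nlinarith [hdiag p, hdiag q]
    calc ‖M p q‖ ≤ |(M p q).re| + |(M p q).im| :=
          Complex.norm_le_abs_re_add_abs_im _
      _ ≤ 2 * t := by linarith

lemma psd_of_forall_seq {σ Φ : Mat ι} (hσ : σ.PosSemidef) (hΦh : Φ.IsHermitian)
    {c : ℝ} {μ : ℕ → ℝ} (hμ : Filter.Tendsto μ Filter.atTop (nhds c))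
    (h : ∀ n, (((μ n : ℝ) : ℂ) • σ - Φ).PosSemidef) :
    (((c : ℝ) : ℂ) • σ - Φ).PosSemidef := by
  have hform : ∀ (r : ℝ) (x : ι → ℂ), star x ⬝ᵥ (((r:ℂ) • σ - Φ).mulVec x)
      = (r:ℂ) * (star x ⬝ᵥ σ.mulVec x) - (star x ⬝ᵥ Φ.mulVec x) := by
    intro r x
    rw [Matrix.sub_mulVec, dotProduct_sub, Matrix.smul_mulVec,
      dotProduct_smul]
    simp [smul_eq_mul]
  refine Matrix.PosSemidef.of_dotProduct_mulVec_nonneg ?_ ?_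
  · show ((c:ℂ) • σ - Φ)ᴴ = _
    rw [Matrix.conjTranspose_sub, Matrix.conjTranspose_smul, hσ.1, hΦh.eq]
    congr 1
    simp
  · intro x
    set s := star x ⬝ᵥ σ.mulVec x with hs_def
    set t := star x ⬝ᵥ Φ.mulVec x with ht_def
    rw [hform]
    have hs := hσ.dotProduct_mulVec_nonneg x
    rw [Complex.nonneg_iff] at hs
    have hn : ∀ n, 0 ≤ (μ n) * s.re - t.re ∧ (μ n) * s.im - t.im = 0 := by
      intro n
      have h2 := (h n).dotProduct_mulVec_nonneg x
      rw [hform] at h2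
      rw [Complex.nonneg_iff] at h2
      constructor
      · have := h2.1
        simpa [Complex.sub_re, Complex.mul_re] using this
      · have := h2.2
        simp only [Complex.sub_im, Complex.mul_im, Complex.ofReal_re, Complex.ofReal_im,
          zero_mul, add_zero] at this
        linarith [this]
    rw [Complex.nonneg_iff]
    constructor
    · have htend : Filter.Tendsto (fun n => (μ n) * s.re - t.re) Filter.atTop
          (nhds (c * s.re - t.re)) := (hμ.mul_const s.re).sub_const t.re
      have hge : 0 ≤ c * s.re - t.re := ge_of_tendsto' htend fun n => (hn n).1
      simpa [Complex.sub_re, Complex.mul_re] using hge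
    · have him : t.im = 0 := by
        have := (hn 0).2
        rw [← hs.2] at this
        linarith
      have hsim0 : (star x ⬝ᵥ σ.mulVec x).im = 0 := hs.2.symm
      have him' : (star x ⬝ᵥ Φ.mulVec x).im = 0 := him
      simp [Complex.sub_im, Complex.mul_im, him', hsim0]

end Topo

end StateProof

namespace StateProof

section Cset

variable {a' b' a b : ℕ} [NeZero a'] [NeZero b'] [NeZero a] [NeZero b]

def Cset (Φ : Matrix ((Fin a' × Fin a) × (Fin b' × Fin b))
    ((Fin a' × Fin a) × (Fin b' × Fin b)) ℂ) (μ : ℝ) : Set (Mat (Fin b' × Fin b)) :=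
  {J | J.PosSemidef ∧ trSnd J = ((b' : ℂ))⁻¹ • (1 : Mat (Fin b')) ∧
    (((μ : ℝ) : ℂ) • ((1 : Mat (Fin a' × Fin a)) ⊗ₖ J) - Φ).PosSemidef}

lemma cset_mono (Φ : Matrix ((Fin a' × Fin a) × (Fin b' × Fin b))
    ((Fin a' × Fin a) × (Fin b' × Fin b)) ℂ) {μ μ' : ℝ} (h : μ ≤ μ') :
    Cset Φ μ ⊆ Cset Φ μ' := by
  rintro J ⟨h1, h2, h3⟩
  refine ⟨h1, h2, ?_⟩
  have hkey : (((μ' : ℝ) : ℂ) • ((1 : Mat (Fin a' × Fin a)) ⊗ₖ J) - Φ)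
      = ((((μ : ℝ) : ℂ) • ((1 : Mat (Fin a' × Fin a)) ⊗ₖ J) - Φ))
        + (((μ' - μ : ℝ) : ℂ) • ((1 : Mat (Fin a' × Fin a)) ⊗ₖ J)) := by
    rw [show ((μ' : ℝ) : ℂ) = ((μ : ℝ) : ℂ) + ((μ' - μ : ℝ) : ℂ) by push_cast; ring, add_smul]
    abel
  rw [hkey]
  exact h3.add (posSemidef_smul_real (kron_one_psd h1) (by linarith))

lemma cset_closed (Φ : Matrix ((Fin a' × Fin a) × (Fin b' × Fin b))
    ((Fin a' × Fin a) × (Fin b' × Fin b)) ℂ) (μ : ℝ) : IsClosed (Cset Φ μ) := by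
  have h1 : Cset Φ μ = ({J : Mat (Fin b' × Fin b) | J.PosSemidef}
      ∩ (trSnd ⁻¹' {(((b':ℂ))⁻¹ • (1 : Mat (Fin b')))}))
      ∩ ((fun J : Mat (Fin b' × Fin b) =>
          (((μ:ℝ):ℂ) • ((1 : Mat (Fin a' × Fin a)) ⊗ₖ J) - Φ)) ⁻¹' {M | M.PosSemidef}) := by
    ext J
    simp only [Cset, Set.mem_setOf_eq, Set.mem_inter_iff, Set.mem_preimage,
      Set.mem_singleton_iff]
    tauto
  rw [h1]
  have hc1 : Continuous (trSnd : Matrix ((Fin b') × (Fin b)) ((Fin b') × (Fin b)) ℂ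
      → Mat (Fin b')) := by
    apply continuous_matrix
    intro i j
    show Continuous fun J : Mat (Fin b' × Fin b) => ∑ k : Fin b, J (i,k) (j,k)
    exact continuous_finset_sum _ fun k _ => continuous_id.matrix_elem _ _
  have hc2 : Continuous fun J : Mat (Fin b' × Fin b) =>
      (((μ:ℝ):ℂ) • ((1 : Mat (Fin a' × Fin a)) ⊗ₖ J) - Φ) := by
    refine Continuous.sub ?_ continuous_const
    refine Continuous.fun_const_smul ?_ _
    apply continuous_matrix
    intro p q
    show Continuous fun J : Mat (Fin b' × Fin b) =>
      (1 : Mat (Fin a' × Fin a)) p.1 q.1 * J p.2 q.2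
    exact continuous_const.mul (continuous_id.matrix_elem _ _)
  exact (isClosed_psd.inter (isClosed_singleton.preimage hc1)).inter (isClosed_psd.preimage hc2)

lemma cset_compact (Φ : Matrix ((Fin a' × Fin a) × (Fin b' × Fin b))
    ((Fin a' × Fin a) × (Fin b' × Fin b)) ℂ) (μ : ℝ) : IsCompact (Cset Φ μ) := by
  refine IsCompact.of_isClosed_subset (isCompact_box 2) (cset_closed Φ μ) ?_
  rintro J ⟨h1, h2, -⟩
  intro p q
  rw [Metric.mem_closedBall, dist_zero_right]
  have hdiag : ∀ p, (J p p).re ≤ 1 := by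
    rintro ⟨i, k⟩
    have hrow : (∑ k' : Fin b, J (i,k') (i,k')) = ((b':ℂ))⁻¹ := by
      have h2' : trSnd J i i = (((b':ℂ))⁻¹ • (1 : Mat (Fin b'))) i i := by rw [h2]
      simpa [Matrix.smul_apply, Matrix.one_apply, trSnd] using h2'
    have h1e : (J (i,k) (i,k)).re ≤ (∑ k' : Fin b, J (i,k') (i,k')).re := by
      rw [Complex.re_sum]
      refine Finset.single_le_sum (f := fun k' => (J (i,k') (i,k')).re) (fun k' _ => ?_) (Finset.mem_univ k)
      exact (Complex.nonneg_iff.mp (psd_diag_nonneg h1 (i,k'))).1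
    have hb1 : (1:ℝ) ≤ (b' : ℝ) := by
      have := Nat.one_le_iff_ne_zero.mpr (NeZero.ne b')
      exact_mod_cast this
    calc (J (i,k) (i,k)).re ≤ ((∑ k' : Fin b, J (i,k') (i,k'))).re := h1e
      _ = ((b':ℝ))⁻¹ := by
          rw [hrow]
          have : ((b':ℂ))⁻¹ = (((b':ℝ)⁻¹ : ℝ) : ℂ) := by push_cast; ring
          rw [this, Complex.ofReal_re]
      _ ≤ 1 := by
          rw [inv_le_one_iff₀]
          right; exact hb1
  have hbd := psd_entry_bound h1 (by norm_num : (0:ℝ) ≤ 1) hdiag p q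
  linarith

lemma cset_inter_nonempty (Φ : Matrix ((Fin a' × Fin a) × (Fin b' × Fin b))
    ((Fin a' × Fin a) × (Fin b' × Fin b)) ℂ) (hΦ : Φ.IsHermitian) {c : ℝ}
    (hne : ∀ n : ℕ, (Cset Φ (c + ((n:ℝ)+1)⁻¹)).Nonempty) : (Cset Φ c).Nonempty := by
  set Z : ℕ → Set (Mat (Fin b' × Fin b)) := fun n => Cset Φ (c + ((n:ℝ)+1)⁻¹) with hZ
  have hsub : ∀ n, Z (n+1) ⊆ Z n := by
    intro n
    apply cset_mono
    have hpos : (0:ℝ) < (n:ℝ) + 1 := by positivity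
    have : ((n:ℝ)+1+1)⁻¹ ≤ ((n:ℝ)+1)⁻¹ := by
      apply inv_anti₀ hpos
      linarith
    push_cast
    linarith
  obtain ⟨J, hJ⟩ := IsCompact.nonempty_iInter_of_sequence_nonempty_isCompact_isClosed Z hsub
    hne (cset_compact Φ _) (fun n => cset_closed Φ _)
  have hmem : ∀ n, J ∈ Z n := fun n => Set.mem_iInter.mp hJ n
  have h1 : J.PosSemidef := (hmem 0).1
  refine ⟨J, h1, (hmem 0).2.1, ?_⟩
  refine psd_of_forall_seq (kron_one_psd h1) hΦ (μ := fun n => c + ((n:ℝ)+1)⁻¹) ?_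
    (fun n => (hmem n).2.2)
  have h0 := tendsto_one_div_add_atTop_nhds_zero_nat (𝕜 := ℝ)
  have h3 : Filter.Tendsto (fun n : ℕ => c + ((n:ℝ)+1)⁻¹) Filter.atTop (nhds (c+0)) :=
    tendsto_const_nhds.add (by simpa [one_div] using h0)
  simpa using h3

end Cset

end StateProof

open StateProof in
/-- For every bipartite channel `N : A'B' → AB`, `S_∞[A|B]_N ≤ log|A|`,
with equality iff `N` is a conditional uniformly mixing channel, i.e. `N = R^π ⊗ Q`
for some channel `Q : B' → B`, where `R^π(X) = tr(X)·1_A/|A|`. -/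
theorem conditional_channel_min_entropy_maximal_iff_uniformly_mixing
    {a' b' a b : ℕ} [NeZero a'] [NeZero b'] [NeZero a] [NeZero b]
    (N : Mat (Fin a' × Fin b') →ₗ[ℂ] Mat (Fin a × Fin b)) (hN : IsChannel N) :
    chanCondMin N ≤ ((Real.logb 2 (a : ℝ) : ℝ) : EReal) ∧
    (chanCondMin N = ((Real.logb 2 (a : ℝ) : ℝ) : EReal) ↔
      ∃ Q : Mat (Fin b') →ₗ[ℂ] Mat (Fin b), IsChannel Q ∧
        N = tensorL (replacer (uniformState a)) Q) := by
  classical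
  set s : ℝ := (a' : ℝ) * (a : ℝ) with hs_def
  have ha'1 : (1:ℝ) ≤ (a' : ℝ) := by exact_mod_cast Nat.one_le_iff_ne_zero.mpr (NeZero.ne a')
  have ha1 : (1:ℝ) ≤ (a : ℝ) := by exact_mod_cast Nat.one_le_iff_ne_zero.mpr (NeZero.ne a)
  have hspos : 0 < s := by rw [hs_def]; nlinarith
  set c : ℝ := s⁻¹ with hc_def
  have hcpos : 0 < c := inv_pos.mpr hspos
  set r0 : ℝ := Real.logb 2 s with hr0
  have hr0a : r0 - Real.logb 2 (a' : ℝ) = Real.logb 2 (a : ℝ) := by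
    rw [hr0, hs_def, Real.logb_mul (by linarith) (by linarith)]
    ring
  have hlogc : Real.logb 2 c = -r0 := by rw [hc_def, Real.logb_inv]
  set ρ := biChoiState N with hρ_def
  have hρtr : ρ.trace = 1 := by
    rw [hρ_def, trace_biChoiState, trace_choiState N hN.2]
  have hρpsd : ρ.PosSemidef := biChoiState_posSemidef hN.1
  have hσtr : ∀ (Q : Mat (Fin b') →ₗ[ℂ] Mat (Fin b)), IsChannel Q →
      ((1 : Mat (Fin a' × Fin a)) ⊗ₖ choiState Q).trace = ((s : ℝ) : ℂ) := by
    intro Q hQ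
    rw [Matrix.trace_kronecker, Matrix.trace_one, trace_choiState Q hQ.2, mul_one]
    rw [hs_def]
    push_cast [Fintype.card_prod, Fintype.card_fin]
    ring
  have hlow : ∀ Q : {Q : Mat (Fin b') →ₗ[ℂ] Mat (Fin b) // IsChannel Q},
      (((-r0 : ℝ)) : EReal) ≤ Dmax ρ ((1 : Mat (Fin a' × Fin a)) ⊗ₖ choiState Q.1) :=
    fun Q => dmax_ge hspos (hσtr Q.1 Q.2) hρtr
  have hInfLB : (((-r0 : ℝ)) : EReal) ≤
      ⨅ Q : {Q : Mat (Fin b') →ₗ[ℂ] Mat (Fin b) // IsChannel Q},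
        Dmax ρ ((1 : Mat (Fin a' × Fin a)) ⊗ₖ choiState Q.1) := le_iInf hlow
  have hchan_eval : chanCondMin N =
      (-(⨅ Q : {Q : Mat (Fin b') →ₗ[ℂ] Mat (Fin b) // IsChannel Q},
        Dmax ρ ((1 : Mat (Fin a' × Fin a)) ⊗ₖ choiState Q.1)))
      - ((Real.logb 2 (a' : ℝ) : ℝ) : EReal) := by
    unfold chanCondMin
    rw [hρ_def, Fintype.card_fin]
  have hnegneg : -((((-r0 : ℝ)) : EReal)) = ((r0 : ℝ) : EReal) := by
    rw [← EReal.coe_neg]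
    norm_num
  have hsub : ∀ z : EReal,
      z - ((Real.logb 2 (a' : ℝ) : ℝ) : EReal)
        = z + (((-Real.logb 2 (a' : ℝ) : ℝ)) : EReal) := by
    intro z
    rw [sub_eq_add_neg, ← EReal.coe_neg]
  have hpart1 : chanCondMin N ≤ ((Real.logb 2 (a : ℝ) : ℝ) : EReal) := by
    rw [hchan_eval]
    have h1 : -(⨅ Q : {Q : Mat (Fin b') →ₗ[ℂ] Mat (Fin b) // IsChannel Q},
        Dmax ρ ((1 : Mat (Fin a' × Fin a)) ⊗ₖ choiState Q.1)) ≤ ((r0 : ℝ) : EReal) := by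
      rw [← hnegneg]
      exact EReal.neg_le_neg_iff.mpr hInfLB
    calc (-(⨅ Q : {Q : Mat (Fin b') →ₗ[ℂ] Mat (Fin b) // IsChannel Q},
          Dmax ρ ((1 : Mat (Fin a' × Fin a)) ⊗ₖ choiState Q.1)))
        - ((Real.logb 2 (a' : ℝ) : ℝ) : EReal)
        ≤ ((r0 : ℝ) : EReal) - ((Real.logb 2 (a' : ℝ) : ℝ) : EReal) :=
          EReal.sub_le_sub h1 (le_refl _)
      _ = ((r0 - Real.logb 2 (a' : ℝ) : ℝ) : EReal) := by rw [← EReal.coe_sub]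
      _ = ((Real.logb 2 (a : ℝ) : ℝ) : EReal) := by rw [hr0a]
  refine ⟨hpart1, ?_, ?_⟩
  · -- forward direction
    intro heq
    have hInfEq : (⨅ Q : {Q : Mat (Fin b') →ₗ[ℂ] Mat (Fin b) // IsChannel Q},
        Dmax ρ ((1 : Mat (Fin a' × Fin a)) ⊗ₖ choiState Q.1)) = (((-r0 : ℝ)) : EReal) := by
      by_contra hcon
      have hlt : (((-r0 : ℝ)) : EReal) < (⨅ Q : {Q : Mat (Fin b') →ₗ[ℂ] Mat (Fin b) //
          IsChannel Q}, Dmax ρ ((1 : Mat (Fin a' × Fin a)) ⊗ₖ choiState Q.1)) :=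
        lt_of_le_of_ne hInfLB (Ne.symm hcon)
      have h2 : -(⨅ Q : {Q : Mat (Fin b') →ₗ[ℂ] Mat (Fin b) // IsChannel Q},
          Dmax ρ ((1 : Mat (Fin a' × Fin a)) ⊗ₖ choiState Q.1)) < ((r0 : ℝ) : EReal) := by
        rw [← hnegneg]
        exact EReal.neg_strictAnti hlt
      have h3 : chanCondMin N < ((Real.logb 2 (a : ℝ) : ℝ) : EReal) := by
        rw [hchan_eval, hsub]
        calc (-(⨅ Q : {Q : Mat (Fin b') →ₗ[ℂ] Mat (Fin b) // IsChannel Q},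
              Dmax ρ ((1 : Mat (Fin a' × Fin a)) ⊗ₖ choiState Q.1)))
            + (((-Real.logb 2 (a' : ℝ) : ℝ)) : EReal)
            < ((r0 : ℝ) : EReal) + (((-Real.logb 2 (a' : ℝ) : ℝ)) : EReal) :=
              EReal.add_lt_add_right_coe h2 _
          _ = ((r0 + -Real.logb 2 (a' : ℝ) : ℝ) : EReal) := by rw [← EReal.coe_add]
          _ = ((Real.logb 2 (a : ℝ) : ℝ) : EReal) := by
              have hx : r0 + -Real.logb 2 (a' : ℝ) = Real.logb 2 (a : ℝ) := by
                linarith [hr0a]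
              rw [hx]
      rw [heq] at h3
      exact lt_irrefl _ h3
    have hne : ∀ n : ℕ, (Cset ρ (c + ((n:ℝ)+1)⁻¹)).Nonempty := by
      intro n
      set μn : ℝ := c + ((n:ℝ)+1)⁻¹ with hμn
      have hinvpos : (0:ℝ) < ((n:ℝ)+1)⁻¹ := by positivity
      have hμgt : c < μn := by rw [hμn]; linarith
      have hμpos : 0 < μn := lt_trans hcpos hμgt
      have hεpos : 0 < Real.logb 2 (μn / c) :=
        Real.logb_pos one_lt_two ((one_lt_div hcpos).mpr hμgt)
      have hlt2 : (⨅ Q : {Q : Mat (Fin b') →ₗ[ℂ] Mat (Fin b) // IsChannel Q},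
          Dmax ρ ((1 : Mat (Fin a' × Fin a)) ⊗ₖ choiState Q.1))
          < (((-r0 + Real.logb 2 (μn / c) : ℝ)) : EReal) := by
        rw [hInfEq]
        exact_mod_cast (by linarith : -r0 < -r0 + Real.logb 2 (μn / c))
      obtain ⟨Q, hQlt⟩ := iInf_lt_iff.mp hlt2
      have hQlt' : sInf {x : EReal | ∃ l : ℝ, 0 ≤ l ∧
          (((l : ℝ) : ℂ) • ((1 : Mat (Fin a' × Fin a)) ⊗ₖ choiState Q.1) - ρ).PosSemidef ∧
          x = ((Real.logb 2 l : ℝ) : EReal)}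
          < (((-r0 + Real.logb 2 (μn / c) : ℝ)) : EReal) := hQlt
      obtain ⟨x, hxmem, hxlt⟩ := sInf_lt_iff.mp hQlt'
      obtain ⟨l, hl0, hpsd, rfl⟩ := hxmem
      have hcl : c ≤ l := scale_lower hspos (hσtr Q.1 Q.2) hρtr hpsd
      have hlpos : 0 < l := lt_of_lt_of_le hcpos hcl
      have hxlt2 : Real.logb 2 l < -r0 + Real.logb 2 (μn / c) := by exact_mod_cast hxlt
      have hsum : -r0 + Real.logb 2 (μn / c) = Real.logb 2 μn := by
        rw [← hlogc, ← Real.logb_mul (ne_of_gt hcpos)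
          (ne_of_gt (div_pos hμpos hcpos))]
        congr 1
        field_simp
      have hlb : Real.logb 2 l < Real.logb 2 μn := by rw [← hsum]; exact hxlt2
      have hlμ : l ≤ μn := by
        by_contra hcon2
        push_neg at hcon2
        have := (Real.logb_le_logb one_lt_two hμpos hlpos).mpr (le_of_lt hcon2)
        linarith
      refine ⟨choiState Q.1, cset_mono ρ hlμ ?_⟩
      refine ⟨choiState_posSemidef Q.2.1, ?_, hpsd⟩
      rw [trSnd_choiState Q.1 Q.2.2]
      norm_num [Fintype.card_fin]
    obtain ⟨J, hJ1, hJ2, hJ3⟩ := cset_inter_nonempty ρ hρpsd.1 hne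
    have htrJ : J.trace = 1 := by
      have hJt : J.trace = (trSnd J).trace := by
        simp [Matrix.trace, Matrix.diag, trSnd, Fintype.sum_prod_type]
      rw [hJt, hJ2, Matrix.trace_smul, Matrix.trace_one]
      simp only [Fintype.card_fin, smul_eq_mul]
      exact inv_mul_cancel₀ (by exact_mod_cast (NeZero.ne b'))
    have hKtr : ((((c : ℝ)) : ℂ) • ((1 : Mat (Fin a' × Fin a)) ⊗ₖ J) - ρ).trace = 0 := by
      rw [Matrix.trace_sub, Matrix.trace_smul, Matrix.trace_kronecker, Matrix.trace_one, htrJ,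
        hρtr, mul_one, smul_eq_mul]
      rw [hc_def, hs_def]
      push_cast [Fintype.card_prod, Fintype.card_fin]
      have haa : ((a' : ℂ)) * (a : ℂ) ≠ 0 := by
        have h1 : (a' : ℂ) ≠ 0 := by exact_mod_cast (NeZero.ne a')
        have h2 : (a : ℂ) ≠ 0 := by exact_mod_cast (NeZero.ne a)
        exact mul_ne_zero h1 h2
      field_simp
      rw [div_self haa, sub_self]
    have hKzero := psd_trace_zero_eq_zero hJ3 hKtr
    have hρeq : ρ = (((c : ℝ)) : ℂ) • ((1 : Mat (Fin a' × Fin a)) ⊗ₖ J) :=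
      (sub_eq_zero.mp hKzero).symm
    refine ⟨mkChan J, ?_, ?_⟩
    · apply mkChan_isChannel hJ1
      rw [hJ2]
      norm_num [Fintype.card_fin]
    · apply eq_of_biChoi
      rw [biChoi_tensor_replacer, choiState_mkChan, ← hρ_def, hρeq, hc_def, hs_def]
  · -- backward direction
    rintro ⟨Q, hQ, hNQ⟩
    have hzero : ((((c : ℝ)) : ℂ) • ((1 : Mat (Fin a' × Fin a)) ⊗ₖ choiState Q) - ρ) = 0 := by
      rw [hρ_def, hNQ, biChoi_tensor_replacer, hc_def, hs_def]
      exact sub_self _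
    have hDle : Dmax ρ ((1 : Mat (Fin a' × Fin a)) ⊗ₖ choiState Q)
        ≤ ((Real.logb 2 c : ℝ) : EReal) :=
      dmax_le (le_of_lt hcpos) (hzero ▸ Matrix.PosSemidef.zero)
    have hInfEq : (⨅ Q' : {Q : Mat (Fin b') →ₗ[ℂ] Mat (Fin b) // IsChannel Q},
        Dmax ρ ((1 : Mat (Fin a' × Fin a)) ⊗ₖ choiState Q'.1)) = (((-r0 : ℝ)) : EReal) := by
      refine le_antisymm ?_ hInfLB
      refine le_trans (iInf_le _ ⟨Q, hQ⟩) ?_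
      rw [hlogc] at hDle
      exact hDle
    rw [hchan_eval, hInfEq, hnegneg, ← EReal.coe_sub, hr0a]
end
end

section
/- For every completely PPT-preserving bipartite quantum channel N: A'B'→AB (i.e., every bipartite channel whose Choi state Φ^N is PPT across the cut R_AA : R_BB), the conditional channel min-entropy satisfies S_∞[A|B]_N ≥ −log|A'|. -/
open scoped ComplexOrder Kronecker
open Matrix

noncomputable section AuxPPT

open Complex

private lemma quad_aux' {n : Type} [Fintype n] (C : n → n → ℂ) :
    0 ≤ (∑ a : n, ∑ α : n, C a α * (starRingEnd ℂ) (C a α)) -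
        ∑ a : n, ∑ a' : n, C a a' * (starRingEnd ℂ) (C a' a) := by
  set R : ℝ := ∑ a : n, ∑ α : n, Complex.normSq (C a α) with hR
  have h1 : (∑ a : n, ∑ α : n, C a α * (starRingEnd ℂ) (C a α)) = (R : ℂ) := by
    rw [hR]; push_cast; simp [Complex.mul_conj]
  set S : ℂ := ∑ a : n, ∑ a' : n, C a a' * (starRingEnd ℂ) (C a' a) with hS
  have hconj : (starRingEnd ℂ) S = S := by
    rw [hS, map_sum, Finset.sum_comm]
    refine Finset.sum_congr rfl fun a _ => ?_
    rw [map_sum]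
    refine Finset.sum_congr rfl fun a' _ => ?_
    simp [mul_comm]
  have him : S.im = 0 := by
    have h := congrArg Complex.im hconj
    simp only [Complex.conj_im] at h
    linarith
  have hre : S.re ≤ R := by
    have step : ∀ a a' : n, (C a a' * (starRingEnd ℂ) (C a' a)).re ≤
        (Complex.normSq (C a a') + Complex.normSq (C a' a)) / 2 := by
      intro a a'
      have h1' := Complex.re_le_norm (C a a' * (starRingEnd ℂ) (C a' a))
      rw [norm_mul, Complex.norm_conj] at h1'
      refine h1'.trans ?_
      have h2 := two_mul_le_add_sq (‖C a a'‖) (‖C a' a‖)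
      rw [Complex.sq_norm, Complex.sq_norm] at h2
      nlinarith [norm_nonneg (C a a'), norm_nonneg (C a' a)]
    calc S.re = ∑ a : n, ∑ a' : n, (C a a' * (starRingEnd ℂ) (C a' a)).re := by
          rw [hS, Complex.re_sum]
          exact Finset.sum_congr rfl fun a _ => Complex.re_sum _ _
      _ ≤ ∑ a : n, ∑ a' : n,
            (Complex.normSq (C a a') + Complex.normSq (C a' a)) / 2 :=
          Finset.sum_le_sum fun a _ => Finset.sum_le_sum fun a' _ => step a a'
      _ = R := by
          have hsw : ∑ a : n, ∑ a' : n, Complex.normSq (C a' a)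
              = ∑ a : n, ∑ a' : n, Complex.normSq (C a a') := Finset.sum_comm
          simp only [add_div, Finset.sum_add_distrib, ← Finset.sum_div]
          rw [hsw, hR]; ring
  rw [h1, Complex.le_def]
  constructor
  · simp only [Complex.zero_re, Complex.sub_re, Complex.ofReal_re]
    linarith
  · simp [him]

private lemma sum_rotate {X Y Z : Type} [Fintype X] [Fintype Y] [Fintype Z]
    (f : X → Y → Z → ℂ) :
    ∑ x : X, ∑ y : Y, ∑ z : Z, f x y z = ∑ z : Z, ∑ x : X, ∑ y : Y, f x y z := by
  calc ∑ x : X, ∑ y : Y, ∑ z : Z, f x y z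
      = ∑ x : X, ∑ z : Z, ∑ y : Y, f x y z :=
        Finset.sum_congr rfl fun x _ => Finset.sum_comm
    _ = ∑ z : Z, ∑ x : X, ∑ y : Y, f x y z := Finset.sum_comm

private lemma quad_expand {ι : Type} [Fintype ι] (M : Mat ι) (v : ι → ℂ) :
    star v ⬝ᵥ (M *ᵥ v) = ∑ p : ι, ∑ q : ι, (starRingEnd ℂ) (v p) * M p q * v q := by
  simp only [dotProduct, Matrix.mulVec, Pi.star_apply, Finset.mul_sum]
  refine Finset.sum_congr rfl fun p _ => Finset.sum_congr rfl fun q _ => ?_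
  simp [dotProduct, mul_assoc, RCLike.star_def]

private lemma single_key {ιA ιB : Type} [Fintype ιA] [DecidableEq ιA] [Fintype ιB]
    (u : ιA × ιB → ℂ) :
    ((1 : Mat ιA) ⊗ₖ trFst (ptransposeSnd (outer u)) - ptransposeSnd (outer u)).PosSemidef := by
  have hAentry : ∀ p q : ιA × ιB,
      ptransposeSnd (outer u) p q = u (p.1, q.2) * (starRingEnd ℂ) (u (q.1, p.2)) := by
    intro p q; rfl
  have hBentry : ∀ b b' : ιB, trFst (ptransposeSnd (outer u)) b b'
      = ∑ α : ιA, u (α, b') * (starRingEnd ℂ) (u (α, b)) := by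
    intro b b'; rfl
  refine Matrix.PosSemidef.of_dotProduct_mulVec_nonneg ?_ ?_
  · -- Hermitian
    have hA : (ptransposeSnd (outer u)).IsHermitian := by
      ext p q
      simp only [Matrix.conjTranspose_apply, hAentry, RCLike.star_def, _root_.map_mul,
        Complex.conj_conj]
      ring
    have hB : (trFst (ptransposeSnd (outer u))).IsHermitian := by
      ext b b'
      simp only [Matrix.conjTranspose_apply, hBentry, RCLike.star_def, map_sum,
        _root_.map_mul, Complex.conj_conj]
      refine Finset.sum_congr rfl fun α _ => ?_
      ring
    have h1B : ((1 : Mat ιA) ⊗ₖ trFst (ptransposeSnd (outer u))).IsHermitian := by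
      ext ⟨i, j⟩ ⟨k, l⟩
      simp only [Matrix.conjTranspose_apply, Matrix.kroneckerMap_apply, star_mul',
        Matrix.one_apply]
      by_cases h : k = i
      · subst h
        simp only [if_true, star_one, one_mul]
        exact hB.apply j l
      · simp [h, Ne.symm h]
    exact h1B.sub hA
  · -- quadratic form
    intro v
    set D : ιA → ιA → ℂ := fun a a' =>
      ∑ b : ιB, (starRingEnd ℂ) (v (a, b)) * (starRingEnd ℂ) (u (a', b)) with hD
    have hDconj : ∀ a a' : ιA, (starRingEnd ℂ) (D a a')
        = ∑ b : ιB, v (a, b) * u (a', b) := by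
      intro a a'
      rw [hD]
      simp only [map_sum, _root_.map_mul, Complex.conj_conj]
    have hT2 : star v ⬝ᵥ (ptransposeSnd (outer u) *ᵥ v)
        = ∑ a : ιA, ∑ a' : ιA, D a a' * (starRingEnd ℂ) (D a' a) := by
      rw [quad_expand]
      simp only [Fintype.sum_prod_type, hAentry]
      rw [show (∑ a : ιA, ∑ b : ιB, ∑ a' : ιA, ∑ b' : ιB,
          (starRingEnd ℂ) (v (a, b)) * (u ((a, b).1, (a', b').2) *
            (starRingEnd ℂ) (u ((a', b').1, (a, b).2))) * v (a', b'))
          = ∑ a : ιA, ∑ a' : ιA, ∑ b : ιB, ∑ b' : ιB,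
          (starRingEnd ℂ) (v (a, b)) * (u (a, b') *
            (starRingEnd ℂ) (u (a', b))) * v (a', b') from
        Finset.sum_congr rfl fun a _ => Finset.sum_comm]
      refine Finset.sum_congr rfl fun a _ => Finset.sum_congr rfl fun a' _ => ?_
      rw [hD, hDconj, Finset.sum_mul_sum]
      refine Finset.sum_congr rfl fun b _ => Finset.sum_congr rfl fun b' _ => ?_
      ring
    have hT1 : star v ⬝ᵥ (((1 : Mat ιA) ⊗ₖ trFst (ptransposeSnd (outer u))) *ᵥ v)
        = ∑ a : ιA, ∑ α : ιA, D a α * (starRingEnd ℂ) (D a α) := by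
      rw [quad_expand]
      simp only [Fintype.sum_prod_type, Matrix.kroneckerMap_apply, Matrix.one_apply, hBentry]
      have step1 : ∀ (a : ιA) (b : ιB),
          (∑ a' : ιA, ∑ b' : ιB, (starRingEnd ℂ) (v (a, b)) *
            ((if a = a' then (1:ℂ) else 0) *
              ∑ α : ιA, u (α, b') * (starRingEnd ℂ) (u (α, b))) * v (a', b'))
          = ∑ b' : ιB, ∑ α : ιA, (starRingEnd ℂ) (v (a, b)) *
              (u (α, b') * (starRingEnd ℂ) (u (α, b))) * v (a, b') := by
        intro a b
        rw [Finset.sum_comm]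
        refine Finset.sum_congr rfl fun b' _ => ?_
        rw [show (∑ a' : ιA, (starRingEnd ℂ) (v (a, b)) *
            ((if a = a' then (1:ℂ) else 0) *
              ∑ α : ιA, u (α, b') * (starRingEnd ℂ) (u (α, b))) * v (a', b'))
            = ∑ a' : ιA, if a = a' then ((starRingEnd ℂ) (v (a, b)) *
              (∑ α : ιA, u (α, b') * (starRingEnd ℂ) (u (α, b))) * v (a', b')) else 0 from
          Finset.sum_congr rfl fun a' _ => by split <;> simp]
        rw [Finset.sum_ite_eq]
        simp [Finset.mul_sum, Finset.sum_mul]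
      rw [show (∑ a : ιA, ∑ b : ιB, ∑ a' : ιA, ∑ b' : ιB, (starRingEnd ℂ) (v (a, b)) *
            ((if a = a' then (1:ℂ) else 0) *
              ∑ α : ιA, u (α, b') * (starRingEnd ℂ) (u (α, b))) * v (a', b'))
          = ∑ a : ιA, ∑ b : ιB, ∑ b' : ιB, ∑ α : ιA, (starRingEnd ℂ) (v (a, b)) *
              (u (α, b') * (starRingEnd ℂ) (u (α, b))) * v (a, b') from
        Finset.sum_congr rfl fun a _ => Finset.sum_congr rfl fun b _ => step1 a b]
      -- now reorder to ∑ a ∑ α ∑ b ∑ b'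
      refine Finset.sum_congr rfl fun a _ => ?_
      rw [sum_rotate]
      refine Finset.sum_congr rfl fun α _ => ?_
      rw [hD, hDconj, Finset.sum_mul_sum]
      refine Finset.sum_congr rfl fun b _ => Finset.sum_congr rfl fun b' _ => ?_
      ring
    rw [Matrix.sub_mulVec, dotProduct_sub, hT1, hT2]
    exact quad_aux' D


private lemma posSemidef_sum {ι n : Type} [Fintype n] (s : Finset ι) (f : ι → Mat n)
    (h : ∀ i ∈ s, (f i).PosSemidef) : (∑ i ∈ s, f i).PosSemidef := by
  classical
  induction s using Finset.induction_on with
  | empty =>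
      simp only [Finset.sum_empty]
      exact ⟨by simp [Matrix.IsHermitian], fun x => by simp⟩
  | insert _ _ hnot ih =>
      rw [Finset.sum_insert hnot]
      exact ((h _ (Finset.mem_insert_self _ _)).add
        (ih fun i hi => h i (Finset.mem_insert_of_mem hi)))

private lemma ptransposeSnd_invol {ιA ιB : Type} (ρ : Matrix (ιA × ιB) (ιA × ιB) ℂ) :
    ptransposeSnd (ptransposeSnd ρ) = ρ := by
  ext ⟨pa, pb⟩ ⟨qa, qb⟩
  rfl

open scoped MatrixOrder in
private lemma key_lemma {ιA ιB : Type} [Fintype ιA] [DecidableEq ιA] [Fintype ιB]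
    [DecidableEq ιB] (ρ : Matrix (ιA × ιB) (ιA × ιB) ℂ)
    (hppt : (ptransposeSnd ρ).PosSemidef) :
    ((1 : Mat ιA) ⊗ₖ trFst ρ - ρ).PosSemidef := by
  set W : Matrix (ιA × ιB) (ιA × ιB) ℂ := CFC.sqrt (ptransposeSnd ρ) with hWdef
  have hWH : W.IsHermitian := (CFC.sqrt_nonneg (ptransposeSnd ρ)).posSemidef.1
  have hZ : ∀ p q : ιA × ιB, ptransposeSnd ρ p q
      = ∑ k : ιA × ιB, (starRingEnd ℂ) (W k p) * W k q := by
    intro p q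
    have h1 : W * W = ptransposeSnd ρ := CFC.sqrt_mul_sqrt_self _ hppt.nonneg
    rw [← h1]
    rw [Matrix.mul_apply]
    refine Finset.sum_congr rfl fun k _ => ?_
    rw [show W p k = (starRingEnd ℂ) (W k p) from (hWH.apply p k).symm]
  set u : (ιA × ιB) → (ιA × ιB) → ℂ := fun k p => (starRingEnd ℂ) (W k p) with hu
  have hρ_eq : ρ = ∑ k : ιA × ιB, ptransposeSnd (outer (u k)) := by
    ext ⟨pa, pb⟩ ⟨qa, qb⟩
    have h0 : ρ (pa, pb) (qa, qb)
        = ptransposeSnd (ptransposeSnd ρ) (pa, pb) (qa, qb) := by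
      rw [ptransposeSnd_invol]
    rw [h0]
    show ptransposeSnd ρ ((pa, pb).1, (qa, qb).2) ((qa, qb).1, (pa, pb).2) = _
    rw [hZ]
    rw [show (∑ k : ιA × ιB, ptransposeSnd (outer (u k))) (pa, pb) (qa, qb)
        = ∑ k : ιA × ιB, ptransposeSnd (outer (u k)) (pa, pb) (qa, qb) from by
      simp [Matrix.sum_apply]]
    refine Finset.sum_congr rfl fun k _ => ?_
    show (starRingEnd ℂ) (W k (pa, qb)) * W k (qa, pb)
      = u k ((pa, pb).1, (qa, qb).2) * (starRingEnd ℂ) (u k ((qa, qb).1, (pa, pb).2))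
    rw [hu]
    simp only [Complex.conj_conj]
  have hsplit : (1 : Mat ιA) ⊗ₖ trFst ρ - ρ = ∑ k : ιA × ιB,
      ((1 : Mat ιA) ⊗ₖ trFst (ptransposeSnd (outer (u k))) - ptransposeSnd (outer (u k))) := by
    rw [hρ_eq]
    ext ⟨pa, pb⟩ ⟨qa, qb⟩
    simp only [Matrix.sub_apply, Matrix.sum_apply, Matrix.kroneckerMap_apply, trFst,
      Matrix.of_apply, Finset.sum_sub_distrib, Finset.mul_sum]
    congr 1
    rw [Finset.sum_comm]
  rw [hsplit]
  exact posSemidef_sum _ _ fun k _ => single_key (u k)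

private lemma trFst_eq_sum_submatrix {ιA ιB : Type} [Fintype ιA] [Fintype ιB]
    (ρ : Matrix (ιA × ιB) (ιA × ιB) ℂ) :
    trFst ρ = ∑ a : ιA, ρ.submatrix (fun i => (a, i)) (fun i => (a, i)) := by
  ext i j
  simp [trFst, Matrix.sum_apply]

private lemma trFst_posSemidef {ιA ιB : Type} [Fintype ιA] [Fintype ιB]
    {ρ : Matrix (ιA × ιB) (ιA × ιB) ℂ} (hρ : ρ.PosSemidef) : (trFst ρ).PosSemidef := by
  rw [trFst_eq_sum_submatrix]
  exact posSemidef_sum _ _ fun a _ => hρ.submatrix _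

private lemma posSemidef_real_smul {ι : Type} [Fintype ι] {M : Mat ι} (hM : M.PosSemidef)
    {c : ℝ} (hc : 0 ≤ c) : (((c : ℂ)) • M).PosSemidef := by
  refine Matrix.PosSemidef.of_dotProduct_mulVec_nonneg ?_ ?_
  · rw [Matrix.IsHermitian, Matrix.conjTranspose_smul, Complex.star_def, Complex.conj_ofReal,
      hM.1]
  · intro x
    rw [Matrix.smul_mulVec, dotProduct_smul, smul_eq_mul]
    exact mul_nonneg (by exact_mod_cast Complex.zero_le_real.mpr hc) (hM.dotProduct_mulVec_nonneg x)

private lemma biChoiState_eq_submatrix {ιA' ιB' κA κB : Type} [Fintype ιA'] [DecidableEq ιA']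
    [Fintype ιB'] [DecidableEq ιB'] (N : Mat (ιA' × ιB') →ₗ[ℂ] Mat (κA × κB)) :
    biChoiState N = (choiState N).submatrix
      (fun x : (ιA' × κA) × (ιB' × κB) => ((x.1.1, x.2.1), (x.1.2, x.2.2)))
      (fun x : (ιA' × κA) × (ιB' × κB) => ((x.1.1, x.2.1), (x.1.2, x.2.2))) := by
  ext ⟨⟨i, p⟩, ⟨j, q⟩⟩ ⟨⟨i', p'⟩, ⟨j', q'⟩⟩
  rfl

private lemma choiState_posSemidef {ι κ : Type} [Fintype ι] [DecidableEq ι] [Fintype κ]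
    {L : Mat ι →ₗ[ℂ] Mat κ} (hL : IsChannel L) : (choiState L).PosSemidef := by
  have h : ((Fintype.card ι : ℂ))⁻¹ = (((Fintype.card ι : ℝ)⁻¹ : ℝ) : ℂ) := by push_cast; rfl
  rw [choiState, h]
  exact posSemidef_real_smul hL.1 (by positivity)

private lemma biChoiState_posSemidef {a' b' a b : ℕ}
    {N : Mat (Fin a' × Fin b') →ₗ[ℂ] Mat (Fin a × Fin b)} (hN : IsChannel N) :
    (biChoiState N).PosSemidef := by
  rw [biChoiState_eq_submatrix]
  exact (choiState_posSemidef hN).submatrix _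

private lemma trace_stdBasisMatrix {ι : Type} [Fintype ι] [DecidableEq ι] (p q : ι) :
    (Matrix.single p q (1 : ℂ)).trace = if p = q then 1 else 0 := by
  rw [Matrix.trace]
  by_cases h : p = q
  · subst h
    rw [if_pos rfl]
    rw [Finset.sum_eq_single p]
    · simp
    · intro r _ hr
      simp only [Matrix.diag_apply]
      exact Matrix.single_apply_of_ne p p 1 r r (fun hc => hr hc.1.symm)
    · intro h'; exact absurd (Finset.mem_univ p) h'
  · simp only [if_neg h]
    refine Finset.sum_eq_zero fun r _ => ?_
    simp only [Matrix.diag_apply]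
    exact Matrix.single_apply_of_ne p q 1 r r (fun hc => h (hc.1.trans hc.2.symm))

private lemma sum_rotate' {X Y Z : Type} [Fintype X] [Fintype Y] [Fintype Z]
    (f : X → Y → Z → ℂ) :
    ∑ x : X, ∑ y : Y, ∑ z : Z, f x y z = ∑ y : Y, ∑ z : Z, ∑ x : X, f x y z :=
  (sum_rotate fun y z x => f x y z).symm

private lemma trSnd_marginal {a' b' a b : ℕ} [NeZero a'] [NeZero b']
    (N : Mat (Fin a' × Fin b') →ₗ[ℂ] Mat (Fin a × Fin b)) (hN : IsChannel N) :
    trSnd (trFst (biChoiState N)) = ((b' : ℂ))⁻¹ • (1 : Mat (Fin b')) := by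
  ext i j
  have hcard : (Fintype.card (Fin a' × Fin b') : ℂ) = ((a' : ℂ)) * ((b' : ℂ)) := by
    simp [Fintype.card_prod]
  have h1 : ∀ k : Fin b, trFst (biChoiState N) (i, k) (j, k)
      = ∑ m : Fin a' × Fin a, (((a' : ℂ)) * ((b' : ℂ)))⁻¹ *
          N (Matrix.single (m.1, i) (m.1, j) 1) (m.2, k) (m.2, k) := by
    intro k
    show (∑ m : Fin a' × Fin a, biChoiState N (m, (i, k)) (m, (j, k))) = _
    refine Finset.sum_congr rfl fun m _ => ?_
    show choiState N ((m.1, i), (m.2, k)) ((m.1, j), (m.2, k)) = _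
    rw [choiState, Matrix.smul_apply, smul_eq_mul, hcard]
    rfl
  show (∑ k : Fin b, trFst (biChoiState N) (i, k) (j, k)) = _
  calc (∑ k : Fin b, trFst (biChoiState N) (i, k) (j, k))
      = ∑ k : Fin b, ∑ m : Fin a' × Fin a, (((a' : ℂ)) * ((b' : ℂ)))⁻¹ *
          N (Matrix.single (m.1, i) (m.1, j) 1) (m.2, k) (m.2, k) :=
        Finset.sum_congr rfl fun k _ => h1 k
    _ = (((a' : ℂ)) * ((b' : ℂ)))⁻¹ * ∑ α : Fin a', ∑ β : Fin a, ∑ k : Fin b,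
          N (Matrix.single (α, i) (α, j) 1) (β, k) (β, k) := by
        rw [Finset.sum_comm]
        simp only [Fintype.sum_prod_type, ← Finset.mul_sum]
    _ = (((a' : ℂ)) * ((b' : ℂ)))⁻¹ * ∑ α : Fin a',
          (N (Matrix.single (α, i) (α, j) 1)).trace := by
        congr 1
        refine Finset.sum_congr rfl fun α _ => ?_
        rw [Matrix.trace]
        simp [Matrix.diag, Fintype.sum_prod_type]
    _ = (((a' : ℂ)) * ((b' : ℂ)))⁻¹ * ∑ α : Fin a',
          (if i = j then (1:ℂ) else 0) := by
        congr 1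
        refine Finset.sum_congr rfl fun α _ => ?_
        rw [hN.2, trace_stdBasisMatrix]
        simp [Prod.ext_iff]
    _ = (((b' : ℂ)))⁻¹ * (if i = j then (1:ℂ) else 0) := by
        rw [Finset.sum_const]
        simp only [Finset.card_univ, Fintype.card_fin, nsmul_eq_mul]
        have ha : (a' : ℂ) ≠ 0 := Nat.cast_ne_zero.mpr (NeZero.ne a')
        have hb : (b' : ℂ) ≠ 0 := Nat.cast_ne_zero.mpr (NeZero.ne b')
        field_simp
    _ = (((b' : ℂ))⁻¹ • (1 : Mat (Fin b'))) i j := by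
        rw [Matrix.smul_apply, Matrix.one_apply, smul_eq_mul]

private def margChan {a' b' a b : ℕ} (N : Mat (Fin a' × Fin b') →ₗ[ℂ] Mat (Fin a × Fin b)) :
    Mat (Fin b') →ₗ[ℂ] Mat (Fin b) where
  toFun X := Matrix.of fun p q => (b' : ℂ) * ∑ i : Fin b', ∑ j : Fin b',
    X i j * trFst (biChoiState N) (i, p) (j, q)
  map_add' X Y := by
    ext p q
    simp only [Matrix.of_apply, Matrix.add_apply, add_mul, Finset.sum_add_distrib, mul_add]
  map_smul' c X := by
    ext p q
    simp only [Matrix.of_apply, Matrix.smul_apply, smul_eq_mul, RingHom.id_apply,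
      Finset.mul_sum]
    exact Finset.sum_congr rfl fun i _ => Finset.sum_congr rfl fun j _ => by ring

private lemma margChan_apply {a' b' a b : ℕ}
    (N : Mat (Fin a' × Fin b') →ₗ[ℂ] Mat (Fin a × Fin b)) (X : Mat (Fin b'))
    (p q : Fin b) :
    margChan N X p q = (b' : ℂ) * ∑ i : Fin b', ∑ j : Fin b',
      X i j * trFst (biChoiState N) (i, p) (j, q) := rfl

private lemma margChan_choiMatrix {a' b' a b : ℕ}
    (N : Mat (Fin a' × Fin b') →ₗ[ℂ] Mat (Fin a × Fin b)) :
    choiMatrix (margChan N) = ((b' : ℂ)) • trFst (biChoiState N) := by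
  ext ⟨i, p⟩ ⟨j, q⟩
  show margChan N (Matrix.single i j 1) p q = _
  rw [margChan_apply, Matrix.smul_apply, smul_eq_mul]
  congr 1
  rw [show (∑ i' : Fin b', ∑ j' : Fin b',
      Matrix.single i j (1:ℂ) i' j' * trFst (biChoiState N) (i', p) (j', q))
      = ∑ i' : Fin b', ∑ j' : Fin b', (if i = i' ∧ j = j' then (1:ℂ) else 0) *
        trFst (biChoiState N) (i', p) (j', q) from rfl]
  simp only [ite_and, ite_mul, one_mul, zero_mul]
  rw [Finset.sum_comm]
  simp [Finset.sum_ite_eq]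

private lemma margChan_choiState {a' b' a b : ℕ} [NeZero b']
    (N : Mat (Fin a' × Fin b') →ₗ[ℂ] Mat (Fin a × Fin b)) :
    choiState (margChan N) = trFst (biChoiState N) := by
  rw [choiState, margChan_choiMatrix]
  rw [smul_smul]
  have hb : (b' : ℂ) ≠ 0 := Nat.cast_ne_zero.mpr (NeZero.ne b')
  rw [show ((Fintype.card (Fin b') : ℂ))⁻¹ * (b' : ℂ) = 1 by
    rw [Fintype.card_fin]; field_simp]
  rw [one_smul]

private lemma margChan_isChannel {a' b' a b : ℕ} [NeZero a'] [NeZero b']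
    (N : Mat (Fin a' × Fin b') →ₗ[ℂ] Mat (Fin a × Fin b)) (hN : IsChannel N) :
    IsChannel (margChan N) := by
  constructor
  · rw [margChan_choiMatrix]
    have h : ((b' : ℂ)) = (((b' : ℝ) : ℂ)) := by push_cast; rfl
    rw [h]
    exact posSemidef_real_smul (trFst_posSemidef (biChoiState_posSemidef hN))
      (by positivity)
  · intro X
    have hb : (b' : ℂ) ≠ 0 := Nat.cast_ne_zero.mpr (NeZero.ne b')
    rw [Matrix.trace]
    calc (∑ p : Fin b, (margChan N X).diag p)
        = ∑ p : Fin b, ∑ i : Fin b', ∑ j : Fin b', (b' : ℂ) *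
            (X i j * trFst (biChoiState N) (i, p) (j, p)) := by
          refine Finset.sum_congr rfl fun p _ => ?_
          rw [Matrix.diag_apply, margChan_apply, Finset.mul_sum]
          exact Finset.sum_congr rfl fun i _ => by rw [Finset.mul_sum]
      _ = ∑ i : Fin b', ∑ j : Fin b', ∑ p : Fin b, (b' : ℂ) *
            (X i j * trFst (biChoiState N) (i, p) (j, p)) := sum_rotate' _
      _ = ∑ i : Fin b', ∑ j : Fin b', (b' : ℂ) *
            (X i j * trSnd (trFst (biChoiState N)) i j) := by
          refine Finset.sum_congr rfl fun i _ => Finset.sum_congr rfl fun j _ => ?_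
          rw [← Finset.mul_sum, ← Finset.mul_sum]
          rfl
      _ = ∑ i : Fin b', X i i := by
          rw [trSnd_marginal N hN]
          refine Finset.sum_congr rfl fun i _ => ?_
          simp only [Matrix.smul_apply, Matrix.one_apply, smul_eq_mul, mul_ite, mul_one,
            mul_zero, ite_mul, zero_mul]
          rw [Finset.sum_ite_eq]
          simp only [Finset.mem_univ, if_true]
          field_simp
      _ = X.trace := rfl

end AuxPPT
/-- For every completely PPT-preserving bipartite channel `N : A'B' → AB`
(i.e. whose Choi state is PPT across the cut `R_AA : R_BB`), the conditional channel
min-entropy satisfies `S_∞[A|B]_N ≥ −log|A'|`. -/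
theorem completely_PPT_preserving_conditional_min_entropy_lower_bound
    {a' b' a b : ℕ} [NeZero a'] [NeZero b'] [NeZero a] [NeZero b]
    (N : Mat (Fin a' × Fin b') →ₗ[ℂ] Mat (Fin a × Fin b)) (hN : IsChannel N)
    (hPPT : IsPPT (biChoiState N)) :
    (((-Real.logb 2 (a' : ℝ)) : ℝ) : EReal) ≤ chanCondMin N := by
  classical
  have hchoi : choiState (margChan N) = trFst (biChoiState N) := margChan_choiState N
  have hQchan : IsChannel (margChan N) := margChan_isChannel N hN
  have hkey : (((1 : Mat (Fin a' × Fin a)) ⊗ₖ trFst (biChoiState N)) -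
      biChoiState N).PosSemidef := key_lemma (biChoiState N) hPPT
  have hD : Dmax (biChoiState N)
      ((1 : Mat (Fin a' × Fin a)) ⊗ₖ choiState (margChan N)) ≤ 0 := by
    refine sInf_le ⟨1, zero_le_one, ?_, ?_⟩
    · rw [hchoi]
      simpa using hkey
    · simp [Real.logb_one]
  have hI : (⨅ Q : {Q : Mat (Fin b') →ₗ[ℂ] Mat (Fin b) // IsChannel Q},
      Dmax (biChoiState N) ((1 : Mat (Fin a' × Fin a)) ⊗ₖ choiState Q.1)) ≤ 0 :=
    by
      refine le_trans (iInf_le _ ⟨margChan N, hQchan⟩) ?_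
      exact hD
  have h0 : (0 : EReal) ≤ -(⨅ Q : {Q : Mat (Fin b') →ₗ[ℂ] Mat (Fin b) // IsChannel Q},
      Dmax (biChoiState N) ((1 : Mat (Fin a' × Fin a)) ⊗ₖ choiState Q.1)) := by
    rw [← neg_zero]
    exact EReal.neg_le_neg_iff.mpr hI
  rw [chanCondMin]
  calc (((-Real.logb 2 (a' : ℝ)) : ℝ) : EReal)
      = 0 - ((Real.logb 2 ((Fintype.card (Fin a') : ℕ) : ℝ) : ℝ) : EReal) := by
        rw [EReal.coe_neg, zero_sub, Fintype.card_fin]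
    _ ≤ _ := EReal.sub_le_sub h0 le_rfl
end

section
/- Let C_U := ∑_{j=1}^{n} |j⟩⟨j| ⊗ U_j be a controlled unitary on ℂ^n ⊗ ℂ^m, where {|j⟩} is an orthonormal basis of ℂ^n and each U_j is a unitary on ℂ^m, and let C_U also denote the bipartite channel ρ ↦ C_U ρ C_Uᴴ (with A' = A = ℂ^n the control and B' = B = ℂ^m the target). Then the down-arrow conditional min-entropy of its Choi state satisfies S↓_∞(R_AA|R_BB)_{Φ^{C_U}} = −log dim span{vec(U_j) : 1 ≤ j ≤ n}, where vec(U) := ∑_i e_i ⊗ U e_i. -/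
open scoped ComplexOrder Kronecker
open Matrix

set_option linter.unusedSectionVars false
set_option linter.unusedVariables false
set_option maxHeartbeats 1000000

noncomputable section CtrlAuxSection
namespace CtrlAux
open Finset
variable {n : ℕ} {κ : Type} [Fintype κ] [DecidableEq κ]

variable {n : ℕ} {κ : Type} [Fintype κ] [DecidableEq κ]

/-- Gram-type matrix `G = ∑ a, |u a⟩⟨u a|`. -/
def gram (u : Fin n → κ → ℂ) : Matrix κ κ ℂ :=
  Matrix.of fun j j' => ∑ a, u a j * (starRingEnd ℂ) (u a j')

lemma gram_eq_mul (u : Fin n → κ → ℂ) :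
    gram u = (Matrix.of fun (j : κ) (a : Fin n) => u a j) *
      (Matrix.of fun (j : κ) (a : Fin n) => u a j)ᴴ := by
  ext j j'
  simp [gram, Matrix.mul_apply, Matrix.conjTranspose_apply]

lemma gram_posSemidef (u : Fin n → κ → ℂ) : (gram u).PosSemidef := by
  rw [gram_eq_mul]; exact Matrix.posSemidef_self_mul_conjTranspose _

lemma gram_rank (u : Fin n → κ → ℂ) :
    (gram u).rank = Module.finrank ℂ (Submodule.span ℂ (Set.range u)) := by
  rw [gram_eq_mul, Matrix.rank_self_mul_conjTranspose,
    Matrix.rank_eq_finrank_span_cols]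
  have h : ((Matrix.of fun (j : κ) (a : Fin n) => u a j)ᵀ) = u := by
    ext a j; simp
  unfold Matrix.col; rw [h]

/-- eigenvalues of the gram matrix -/
def Gd (u : Fin n → κ → ℂ) : κ → ℝ := (gram_posSemidef u).1.eigenvalues

/-- eigenvector unitary of the gram matrix -/
def GV (u : Fin n → κ → ℂ) : Matrix κ κ ℂ := ((gram_posSemidef u).1.eigenvectorUnitary : Matrix κ κ ℂ)

lemma Gd_nonneg (u : Fin n → κ → ℂ) (k : κ) : 0 ≤ Gd u k :=
  (gram_posSemidef u).eigenvalues_nonneg k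

lemma spec (u : Fin n → κ → ℂ) (k k' : κ) :
    ∑ j' : κ, (∑ j : κ, (starRingEnd ℂ) (GV u j k) * gram u j j') * GV u j' k' =
      if k = k' then ((Gd u k : ℝ) : ℂ) else 0 := by
  have h := (gram_posSemidef u).1.conjStarAlgAut_star_eigenvectorUnitary
  rw [Unitary.conjStarAlgAut_star_apply] at h
  have h2 := congrFun (congrFun (congrArg (fun M => M) h) k) k'
  simpa [Matrix.mul_apply, Matrix.star_apply, Matrix.diagonal_apply, GV, Gd,
    RCLike.ofReal_alg] using h2

lemma onb_col (u : Fin n → κ → ℂ) (k k' : κ) :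
    ∑ j : κ, (starRingEnd ℂ) (GV u j k) * GV u j k' = if k = k' then 1 else 0 := by
  have h : star (GV u) * GV u = 1 :=
    Matrix.mem_unitaryGroup_iff'.mp (gram_posSemidef u).1.eigenvectorUnitary.2
  have h2 := congrFun (congrFun (congrArg (fun M => M) h) k) k'
  simpa [Matrix.mul_apply, Matrix.star_apply, Matrix.one_apply] using h2

lemma onb_row (u : Fin n → κ → ℂ) (j j' : κ) :
    ∑ k : κ, GV u j k * (starRingEnd ℂ) (GV u j' k) = if j = j' then 1 else 0 := by
  have h : GV u * star (GV u) = 1 :=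
    Matrix.mem_unitaryGroup_iff.mp (gram_posSemidef u).1.eigenvectorUnitary.2
  have h2 := congrFun (congrFun (congrArg (fun M => M) h) j) j'
  simpa [Matrix.mul_apply, Matrix.star_apply, Matrix.one_apply] using h2


lemma sum3_comm {ι1 ι2 ι3 : Type} [Fintype ι1] [Fintype ι2] [Fintype ι3]
    (f : ι1 → ι2 → ι3 → ℂ) :
    ∑ a, ∑ k, ∑ k', f a k k' = ∑ k, ∑ k', ∑ a, f a k k' := by
  rw [Finset.sum_comm]
  exact Finset.sum_congr rfl fun k _ => Finset.sum_comm

noncomputable def inn (u y : κ → ℂ) : ℂ := ∑ j, (starRingEnd ℂ) (u j) * y j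

noncomputable def bv (u : Fin n → κ → ℂ) (y : κ → ℂ) (k : κ) : ℂ :=
  ∑ j, (starRingEnd ℂ) (GV u j k) * y j

lemma expand (u : Fin n → κ → ℂ) (a : Fin n) (j : κ) :
    u a j = ∑ k, GV u j k * bv u (u a) k := by
  simp only [bv, Finset.mul_sum]
  rw [Finset.sum_comm]
  symm
  calc ∑ j' : κ, ∑ k : κ, GV u j k * ((starRingEnd ℂ) (GV u j' k) * u a j')
      = ∑ j' : κ, (∑ k : κ, GV u j k * (starRingEnd ℂ) (GV u j' k)) * u a j' := by
        refine Finset.sum_congr rfl fun j' _ => ?_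
        rw [Finset.sum_mul]
        exact Finset.sum_congr rfl fun k _ => by ring
    _ = ∑ j' : κ, (if j = j' then 1 else 0) * u a j' := by
        refine Finset.sum_congr rfl fun j' _ => by rw [onb_row]
    _ = u a j := by simp

lemma inner_eq (u : Fin n → κ → ℂ) (a : Fin n) (y : κ → ℂ) :
    inn (u a) y = ∑ k, (starRingEnd ℂ) (bv u (u a) k) * bv u y k := by
  unfold inn bv
  calc ∑ j, (starRingEnd ℂ) (u a j) * y j
      = ∑ j, ∑ k, (starRingEnd ℂ) (GV u j k * bv u (u a) k) * y j := by
        refine Finset.sum_congr rfl fun j _ => ?_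
        rw [← Finset.sum_mul, ← map_sum, ← expand]
    _ = ∑ k, ∑ j, (starRingEnd ℂ) (bv u (u a) k) * ((starRingEnd ℂ) (GV u j k) * y j) := by
        rw [Finset.sum_comm]
        exact Finset.sum_congr rfl fun k _ => Finset.sum_congr rfl fun j _ => by
          simp only [_root_.map_mul]; ring
    _ = ∑ k, (starRingEnd ℂ) (bv u (u a) k) * ∑ j, (starRingEnd ℂ) (GV u j k) * y j := by
        exact Finset.sum_congr rfl fun k _ => by rw [Finset.mul_sum]

lemma gramsum (u : Fin n → κ → ℂ) (k k' : κ) :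
    ∑ a, bv u (u a) k * (starRingEnd ℂ) (bv u (u a) k') =
      if k = k' then ((Gd u k : ℝ) : ℂ) else 0 := by
  rw [← spec u k k']
  calc ∑ a, bv u (u a) k * (starRingEnd ℂ) (bv u (u a) k')
      = ∑ a, ∑ j, ∑ j', ((starRingEnd ℂ) (GV u j k) * (u a j * (starRingEnd ℂ) (u a j')))
          * GV u j' k' := by
        refine Finset.sum_congr rfl fun a _ => ?_
        unfold bv
        rw [map_sum, Finset.sum_mul_sum]
        refine Finset.sum_congr rfl fun j _ => Finset.sum_congr rfl fun j' _ => by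
          simp only [_root_.map_mul, Complex.conj_conj]; ring
    _ = ∑ j, ∑ j', ∑ a, ((starRingEnd ℂ) (GV u j k) * (u a j * (starRingEnd ℂ) (u a j')))
          * GV u j' k' := sum3_comm _
    _ = ∑ j', ∑ j, ∑ a, ((starRingEnd ℂ) (GV u j k) * (u a j * (starRingEnd ℂ) (u a j')))
          * GV u j' k' := Finset.sum_comm
    _ = ∑ j' : κ, (∑ j : κ, (starRingEnd ℂ) (GV u j k) * gram u j j') * GV u j' k' := by
        refine Finset.sum_congr rfl fun j' _ => ?_
        rw [Finset.sum_mul]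
        refine Finset.sum_congr rfl fun j _ => ?_
        have : (starRingEnd ℂ) (GV u j k) * gram u j j' * GV u j' k' =
            ∑ a, ((starRingEnd ℂ) (GV u j k) * (u a j * (starRingEnd ℂ) (u a j')))
              * GV u j' k' := by
          show (starRingEnd ℂ) (GV u j k) * (∑ a, u a j * (starRingEnd ℂ) (u a j'))
              * GV u j' k' = _
          rw [Finset.mul_sum, Finset.sum_mul]
        rw [this]

lemma gramsum_normSq (u : Fin n → κ → ℂ) (k : κ) :
    ∑ a, Complex.normSq (bv u (u a) k) = Gd u k := by
  have h := gramsum u k k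
  rw [if_pos rfl] at h
  have h2 : ∀ a : Fin n, bv u (u a) k * (starRingEnd ℂ) (bv u (u a) k) =
      ((Complex.normSq (bv u (u a) k) : ℝ) : ℂ) := fun a => Complex.mul_conj _
  rw [Finset.sum_congr rfl (fun a _ => h2 a), ← Complex.ofReal_sum] at h
  exact_mod_cast h

lemma bv_zero_of_Gd_zero (u : Fin n → κ → ℂ) (k : κ) (hk : Gd u k = 0) (a : Fin n) :
    bv u (u a) k = 0 := by
  have h := gramsum_normSq u k
  rw [hk] at h
  have := (Finset.sum_eq_zero_iff_of_nonneg (fun a _ => Complex.normSq_nonneg _)).mp h a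
    (Finset.mem_univ a)
  exact Complex.normSq_eq_zero.mp this

lemma qform (u : Fin n → κ → ℂ) (y : κ → ℂ) :
    ∑ a, Complex.normSq (inn (u a) y) = ∑ k, Gd u k * Complex.normSq (bv u y k) := by
  have key : ((∑ a, Complex.normSq (inn (u a) y) : ℝ) : ℂ) =
      ((∑ k, Gd u k * Complex.normSq (bv u y k) : ℝ) : ℂ) := by
    push_cast
    calc ∑ a, ((Complex.normSq (inn (u a) y) : ℝ) : ℂ)
        = ∑ a, ∑ k, ∑ k', ((starRingEnd ℂ) (bv u (u a) k) * bv u y k) *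
            (bv u (u a) k' * (starRingEnd ℂ) (bv u y k')) := by
          refine Finset.sum_congr rfl fun a _ => ?_
          rw [← Complex.mul_conj, inner_eq, map_sum, Finset.sum_mul_sum]
          refine Finset.sum_congr rfl fun k _ => Finset.sum_congr rfl fun k' _ => by
            simp only [_root_.map_mul, Complex.conj_conj]
        _ = ∑ k, ∑ k', ∑ a, ((starRingEnd ℂ) (bv u (u a) k) * bv u y k) *
            (bv u (u a) k' * (starRingEnd ℂ) (bv u y k')) := sum3_comm _
        _ = ∑ k, ∑ k', (∑ a, bv u (u a) k' * (starRingEnd ℂ) (bv u (u a) k)) *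
            (bv u y k * (starRingEnd ℂ) (bv u y k')) := by
          refine Finset.sum_congr rfl fun k _ => Finset.sum_congr rfl fun k' _ => ?_
          rw [Finset.sum_mul]
          exact Finset.sum_congr rfl fun a _ => by ring
        _ = ∑ k, ∑ k', (if k' = k then ((Gd u k' : ℝ) : ℂ) else 0) *
            (bv u y k * (starRingEnd ℂ) (bv u y k')) := by
          refine Finset.sum_congr rfl fun k _ => Finset.sum_congr rfl fun k' _ => by
            rw [gramsum]
        _ = ∑ k, ((Gd u k : ℝ) : ℂ) * (bv u y k * (starRingEnd ℂ) (bv u y k)) := by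
          refine Finset.sum_congr rfl fun k _ => ?_
          simp only [ite_mul, zero_mul, Finset.sum_ite_eq', Finset.mem_univ, if_true]
        _ = ∑ k, ((Gd u k : ℝ) : ℂ) * ((Complex.normSq (bv u y k) : ℝ) : ℂ) := by
          exact Finset.sum_congr rfl fun k _ => by rw [Complex.mul_conj]
  exact_mod_cast key

lemma rank_card (u : Fin n → κ → ℂ) :
    Module.finrank ℂ (Submodule.span ℂ (Set.range u)) = Fintype.card {k // Gd u k ≠ 0} := by
  rw [← gram_rank u]
  exact (gram_posSemidef u).1.rank_eq_card_non_zero_eigs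
/-- Cauchy–Schwarz step -/

lemma cs (u : Fin n → κ → ℂ) (y : Fin n → κ → ℂ) :
    Complex.normSq (∑ a, inn (u a) (y a)) ≤
      (Fintype.card {k // Gd u k ≠ 0} : ℝ) *
        ∑ a, ∑ a', Complex.normSq (inn (u a') (y a)) := by
  classical
  set R : ℝ := (Fintype.card {k // Gd u k ≠ 0} : ℝ) with hR
  set f : Fin n × κ → ℂ := fun p => (starRingEnd ℂ) (bv u (u p.1) p.2) * bv u (y p.1) p.2
    with hf
  have hs : ∑ a, inn (u a) (y a) = ∑ p : Fin n × κ, f p := by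
    rw [Fintype.sum_prod_type]
    exact Finset.sum_congr rfl fun a _ => inner_eq u a (y a)
  set F : Fin n × κ → ℝ := fun p => ‖bv u (u p.1) p.2‖ / Real.sqrt (Gd u p.2)
  set G : Fin n × κ → ℝ := fun p => Real.sqrt (Gd u p.2) * ‖bv u (y p.1) p.2‖
  have habs : ‖∑ p : Fin n × κ, f p‖ ≤ ∑ p : Fin n × κ, F p * G p := by
    refine le_trans (norm_sum_le _ _) (Finset.sum_le_sum fun p _ => ?_)
    rcases eq_or_ne (Gd u p.2) 0 with h0 | h0
    · simp [hf, bv_zero_of_Gd_zero u p.2 h0 p.1, F, G]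
    · have hpos : 0 < Gd u p.2 := lt_of_le_of_ne (Gd_nonneg u p.2) (Ne.symm h0)
      have hsq : Real.sqrt (Gd u p.2) ≠ 0 := by positivity
      simp only [hf, F, G, norm_mul, Complex.norm_conj]
      rw [div_mul_eq_mul_div, mul_comm (Real.sqrt _) _, ← mul_assoc, mul_div_assoc,
        div_self hsq, mul_one]
  have hF2 : ∑ p : Fin n × κ, F p ^ 2 = R := by
    rw [Fintype.sum_prod_type_right]
    have hk : ∀ k : κ, ∑ a : Fin n, F (a, k) ^ 2 = if Gd u k ≠ 0 then (1:ℝ) else 0 := by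
      intro k
      rcases eq_or_ne (Gd u k) 0 with h0 | h0
      · simp only [h0, ne_eq, not_true_eq_false, if_false]
        refine Finset.sum_eq_zero fun a _ => ?_
        simp [F, bv_zero_of_Gd_zero u k h0 a]
      · have : ∀ a : Fin n, F (a, k) ^ 2 = Complex.normSq (bv u (u a) k) / Gd u k := by
          intro a
          simp only [F, div_pow, Real.sq_sqrt (Gd_nonneg u k), Complex.sq_norm]
        rw [Finset.sum_congr rfl fun a _ => this a, ← Finset.sum_div, gramsum_normSq,
          div_self h0, if_pos h0]
    rw [Finset.sum_congr rfl fun k _ => hk k, Finset.sum_boole, hR, Fintype.card_subtype]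
  have hG2 : ∑ p : Fin n × κ, G p ^ 2 = ∑ a, ∑ a', Complex.normSq (inn (u a') (y a)) := by
    rw [Fintype.sum_prod_type]
    refine Finset.sum_congr rfl fun a _ => ?_
    rw [qform u (y a)]
    refine Finset.sum_congr rfl fun k _ => ?_
    simp only [G, mul_pow, Real.sq_sqrt (Gd_nonneg u k), Complex.sq_norm]
  have hcs := Finset.sum_mul_sq_le_sq_mul_sq Finset.univ F G
  rw [hF2, hG2] at hcs
  have h1 : Complex.normSq (∑ a, inn (u a) (y a)) =
      ‖∑ p : Fin n × κ, f p‖ ^ 2 := by rw [hs, Complex.sq_norm]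
  rw [h1]
  refine le_trans (pow_le_pow_left₀ (norm_nonneg _) habs 2) hcs
/-- test vector -/
lemma testvec (u : Fin n → κ → ℂ) :
    ∃ z : Fin n → κ → ℂ,
      (∑ a, inn (u a) (z a)) = (((Fintype.card {k // Gd u k ≠ 0} : ℝ)) : ℂ) ∧
      ∑ a, ∑ a', Complex.normSq (inn (u a') (z a)) =
        (Fintype.card {k // Gd u k ≠ 0} : ℝ) := by
  classical
  set coef : Fin n → κ → ℂ := fun a k =>
    if Gd u k = 0 then 0 else (((Gd u k : ℝ) : ℂ))⁻¹ * bv u (u a) k with hcoef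
  have hbv : ∀ (a : Fin n) (k0 : κ), bv u (fun j => ∑ k, coef a k * GV u j k) k0 = coef a k0 := by
    intro a k0
    unfold bv
    calc ∑ j, (starRingEnd ℂ) (GV u j k0) * ∑ k, coef a k * GV u j k
        = ∑ j, ∑ k, coef a k * ((starRingEnd ℂ) (GV u j k0) * GV u j k) := by
          refine Finset.sum_congr rfl fun j _ => ?_
          rw [Finset.mul_sum]
          exact Finset.sum_congr rfl fun k _ => by ring
      _ = ∑ k, coef a k * ∑ j, (starRingEnd ℂ) (GV u j k0) * GV u j k := by
          rw [Finset.sum_comm]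
          exact Finset.sum_congr rfl fun k _ => by rw [Finset.mul_sum]
      _ = coef a k0 := by
          rw [Finset.sum_congr rfl fun k _ => by rw [onb_col u k0 k]]
          simp
  refine ⟨fun a j => ∑ k, coef a k * GV u j k, ?_, ?_⟩
  · calc ∑ a, inn (u a) (fun j => ∑ k, coef a k * GV u j k)
        = ∑ a, ∑ k, (starRingEnd ℂ) (bv u (u a) k) * coef a k := by
          refine Finset.sum_congr rfl fun a _ => ?_
          rw [inner_eq]
          exact Finset.sum_congr rfl fun k _ => by rw [hbv]
      _ = ∑ k, ∑ a, (starRingEnd ℂ) (bv u (u a) k) * coef a k := Finset.sum_comm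
      _ = ∑ k, if Gd u k = 0 then 0 else (((Gd u k : ℝ)) : ℂ)⁻¹ * ((Gd u k : ℝ) : ℂ) := by
          refine Finset.sum_congr rfl fun k _ => ?_
          rcases eq_or_ne (Gd u k) 0 with h0 | h0
          · simp [hcoef, h0, bv_zero_of_Gd_zero u k h0]
          · rw [if_neg h0]
            have : ∀ a : Fin n, (starRingEnd ℂ) (bv u (u a) k) * coef a k =
                (((Gd u k : ℝ) : ℂ))⁻¹ * ((Complex.normSq (bv u (u a) k) : ℝ) : ℂ) := by
              intro a
              rw [hcoef]
              simp only [if_neg h0]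
              rw [← Complex.mul_conj]
              ring
            rw [Finset.sum_congr rfl fun a _ => this a, ← Finset.mul_sum, ← Complex.ofReal_sum,
              gramsum_normSq]
      _ = ∑ k, if Gd u k ≠ 0 then (1:ℂ) else 0 := by
          refine Finset.sum_congr rfl fun k _ => ?_
          rcases eq_or_ne (Gd u k) 0 with h0 | h0
          · simp [h0]
          · rw [if_neg h0, if_pos h0, inv_mul_cancel₀ (by exact_mod_cast h0)]
      _ = (((Fintype.card {k // Gd u k ≠ 0} : ℝ)) : ℂ) := by
          rw [Finset.sum_boole, Fintype.card_subtype]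
          norm_num
  · calc ∑ a, ∑ a', Complex.normSq (inn (u a') fun j => ∑ k, coef a k * GV u j k)
        = ∑ a, ∑ k, Gd u k * Complex.normSq (coef a k) := by
          refine Finset.sum_congr rfl fun a _ => ?_
          rw [qform]
          exact Finset.sum_congr rfl fun k _ => by rw [hbv]
      _ = ∑ k, ∑ a, Gd u k * Complex.normSq (coef a k) := Finset.sum_comm
      _ = ∑ k, if Gd u k ≠ 0 then (1:ℝ) else 0 := by
          refine Finset.sum_congr rfl fun k _ => ?_
          rcases eq_or_ne (Gd u k) 0 with h0 | h0
          · simp [hcoef, h0]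
          · rw [if_pos h0]
            have hterm : ∀ a : Fin n, Gd u k * Complex.normSq (coef a k) =
                (Gd u k)⁻¹ * Complex.normSq (bv u (u a) k) := by
              intro a
              rw [hcoef]
              simp only [if_neg h0]
              rw [Complex.normSq_mul]
              have : Complex.normSq ((((Gd u k : ℝ)) : ℂ))⁻¹ = ((Gd u k)⁻¹) ^ 2 := by
                rw [Complex.normSq_inv, Complex.normSq_ofReal, mul_inv, sq]
              rw [this]
              field_simp
            rw [Finset.sum_congr rfl fun a _ => hterm a, ← Finset.mul_sum, gramsum_normSq,
              inv_mul_cancel₀ h0]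
      _ = (Fintype.card {k // Gd u k ≠ 0} : ℝ) := by
          rw [Finset.sum_boole, Fintype.card_subtype]

lemma conj_mul_self (z : ℂ) :
    ((Complex.normSq z : ℝ) : ℂ) = (starRingEnd ℂ) z * z := by
  rw [mul_comm, Complex.mul_conj]

/-- the vectorized controlled unitary -/
noncomputable def wv (u : Fin n → κ → ℂ) (p : (Fin n × Fin n) × κ) : ℂ :=
  (if p.1.2 = p.1.1 then 1 else 0) * u p.1.2 p.2

lemma quad_expand {ι : Type} [Fintype ι] (M : Matrix ι ι ℂ) (x : ι → ℂ) :
    dotProduct (star x) (M *ᵥ x) =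
      ∑ p, ∑ q, (starRingEnd ℂ) (x p) * M p q * x q := by
  simp only [dotProduct, Matrix.mulVec, Pi.star_apply, RCLike.star_def, Finset.mul_sum]
  exact Finset.sum_congr rfl fun p _ => Finset.sum_congr rfl fun q _ => by ring

lemma gram_quad (u : Fin n → κ → ℂ) (y : κ → ℂ) :
    ∑ k, ∑ k', (starRingEnd ℂ) (y k) * gram u k k' * y k' =
      ((∑ a, Complex.normSq (inn (u a) y) : ℝ) : ℂ) := by
  push_cast
  symm
  calc ∑ a, ((Complex.normSq (inn (u a) y) : ℝ) : ℂ)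
      = ∑ a, ∑ k, ∑ k', (starRingEnd ℂ) (y k) * (u a k * (starRingEnd ℂ) (u a k')) * y k' := by
        refine Finset.sum_congr rfl fun a _ => ?_
        rw [conj_mul_self]
        unfold inn
        rw [map_sum, Finset.sum_mul_sum]
        refine Finset.sum_congr rfl fun k _ => Finset.sum_congr rfl fun k' _ => by
          simp only [_root_.map_mul, Complex.conj_conj]; try ring
    _ = ∑ k, ∑ k', ∑ a, (starRingEnd ℂ) (y k) * (u a k * (starRingEnd ℂ) (u a k')) * y k' :=
        sum3_comm _
    _ = ∑ k, ∑ k', (starRingEnd ℂ) (y k) * gram u k k' * y k' := by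
        refine Finset.sum_congr rfl fun k _ => Finset.sum_congr rfl fun k' _ => ?_
        show _ = (starRingEnd ℂ) (y k) * (∑ a, u a k * (starRingEnd ℂ) (u a k')) * y k'
        rw [Finset.mul_sum, Finset.sum_mul]

lemma sigma_quad (u : Fin n → κ → ℂ) (c : ℝ) {σ : Mat ((Fin n × Fin n) × κ)}
    (hσ : ∀ p q, σ p q = (if p.1 = q.1 then 1 else 0) * ((c : ℂ) * gram u p.2 q.2))
    (x : ((Fin n × Fin n) × κ) → ℂ) :
    dotProduct (star x) (σ *ᵥ x) =
      ((c * ∑ ia : Fin n × Fin n,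
        ∑ a', Complex.normSq (inn (u a') (fun k => x (ia, k))) : ℝ) : ℂ) := by
  rw [quad_expand]
  have step1 : ∀ p q : (Fin n × Fin n) × κ,
      (starRingEnd ℂ) (x p) * σ p q * x q =
        (if p.1 = q.1 then 1 else 0) *
          ((c : ℂ) * ((starRingEnd ℂ) (x p) * gram u p.2 q.2 * x q)) := by
    intro p q
    rw [hσ]
    rcases eq_or_ne p.1 q.1 with h | h
    · simp only [h, if_pos rfl, one_mul]; ring
    · simp [h]
  rw [Finset.sum_congr rfl fun p _ => Finset.sum_congr rfl fun q _ => step1 p q]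
  rw [Fintype.sum_prod_type]
  have hblock : ∀ ia : Fin n × Fin n,
      ∑ k, ∑ q : (Fin n × Fin n) × κ, (if (ia, k).1 = q.1 then (1:ℂ) else 0) *
        ((c : ℂ) * ((starRingEnd ℂ) (x (ia, k)) * gram u k q.2 * x q)) =
      (c : ℂ) * ((∑ a', Complex.normSq (inn (u a') (fun k => x (ia, k))) : ℝ) : ℂ) := by
    intro ia
    rw [← gram_quad u (fun k => x (ia, k))]
    calc ∑ k, ∑ q : (Fin n × Fin n) × κ, (if (ia, k).1 = q.1 then (1:ℂ) else 0) *
        ((c : ℂ) * ((starRingEnd ℂ) (x (ia, k)) * gram u k q.2 * x q))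
        = ∑ k, ∑ ia', ∑ k', (if ia = ia' then (1:ℂ) else 0) *
            ((c : ℂ) * ((starRingEnd ℂ) (x (ia, k)) * gram u k k' * x (ia', k'))) := by
          exact Finset.sum_congr rfl fun k _ => by rw [Fintype.sum_prod_type]
      _ = ∑ k, ∑ ia', (if ia = ia' then (1:ℂ) else 0) *
            ∑ k', (c : ℂ) * ((starRingEnd ℂ) (x (ia, k)) * gram u k k' * x (ia', k')) := by
          refine Finset.sum_congr rfl fun k _ => Finset.sum_congr rfl fun ia' _ => ?_
          rw [Finset.mul_sum]
      _ = ∑ k, ∑ k', (c : ℂ) * ((starRingEnd ℂ) (x (ia, k)) * gram u k k' * x (ia, k')) := by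
          refine Finset.sum_congr rfl fun k _ => ?_
          simp only [ite_mul, one_mul, zero_mul, Finset.sum_ite_eq, Finset.mem_univ, if_true]
      _ = (c : ℂ) * ∑ k, ∑ k', (starRingEnd ℂ) (x (ia, k)) * gram u k k' * x (ia, k') := by
        rw [Finset.mul_sum]
        exact Finset.sum_congr rfl fun k _ => by rw [Finset.mul_sum]
  rw [Finset.sum_congr rfl fun ia _ => hblock ia, ← Finset.mul_sum]
  push_cast
  rfl

lemma wsum (u : Fin n → κ → ℂ) (x : ((Fin n × Fin n) × κ) → ℂ) :
    ∑ q : (Fin n × Fin n) × κ, (starRingEnd ℂ) (wv u q) * x q =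
      ∑ a, inn (u a) (fun k => x ((a, a), k)) := by
  rw [Fintype.sum_prod_type]
  rw [Fintype.sum_prod_type]
  have step : ∀ i a : Fin n, ∑ k, (starRingEnd ℂ) (wv u ((i, a), k)) * x ((i, a), k) =
      if a = i then inn (u a) (fun k => x ((i, a), k)) else 0 := by
    intro i a
    rcases eq_or_ne a i with h | h
    · rw [if_pos h]
      unfold inn wv
      refine Finset.sum_congr rfl fun k _ => ?_
      subst h
      simp
    · rw [if_neg h]
      refine Finset.sum_eq_zero fun k _ => ?_
      unfold wv
      simp [h]
  rw [Finset.sum_congr rfl fun i _ => Finset.sum_congr rfl fun a _ => step i a]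
  rw [Finset.sum_comm]
  refine Finset.sum_congr rfl fun a _ => ?_
  rw [Finset.sum_ite_eq Finset.univ a (fun i => inn (u a) (fun k => x ((i, a), k)))]
  simp

lemma rho_quad (u : Fin n → κ → ℂ) (c : ℝ) {ρ : Mat ((Fin n × Fin n) × κ)}
    (hρ : ∀ p q, ρ p q = (c : ℂ) * (wv u p * (starRingEnd ℂ) (wv u q)))
    (x : ((Fin n × Fin n) × κ) → ℂ) :
    dotProduct (star x) (ρ *ᵥ x) =
      ((c * Complex.normSq (∑ a, inn (u a) (fun k => x ((a, a), k))) : ℝ) : ℂ) := by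
  rw [quad_expand]
  have step1 : ∀ p q : (Fin n × Fin n) × κ,
      (starRingEnd ℂ) (x p) * ρ p q * x q =
        ((starRingEnd ℂ) (x p) * wv u p) * ((c : ℂ) * ((starRingEnd ℂ) (wv u q) * x q)) := by
    intro p q; rw [hρ]; ring
  rw [Finset.sum_congr rfl fun p _ => Finset.sum_congr rfl fun q _ => step1 p q]
  have step2 : ∑ p : (Fin n × Fin n) × κ, ∑ q : (Fin n × Fin n) × κ,
      ((starRingEnd ℂ) (x p) * wv u p) * ((c : ℂ) * ((starRingEnd ℂ) (wv u q) * x q)) =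
      (∑ p : (Fin n × Fin n) × κ, (starRingEnd ℂ) (x p) * wv u p) *
        ((c : ℂ) * ∑ q : (Fin n × Fin n) × κ, (starRingEnd ℂ) (wv u q) * x q) := by
    rw [Finset.sum_mul]
    refine Finset.sum_congr rfl fun p _ => ?_
    rw [Finset.mul_sum, Finset.mul_sum]
  rw [step2]
  have step3 : ∑ p : (Fin n × Fin n) × κ, (starRingEnd ℂ) (x p) * wv u p =
      (starRingEnd ℂ) (∑ q : (Fin n × Fin n) × κ, (starRingEnd ℂ) (wv u q) * x q) := by
    rw [map_sum]
    exact Finset.sum_congr rfl fun q _ => by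
      simp only [_root_.map_mul, Complex.conj_conj]; ring
  rw [step3, wsum]
  rw [Complex.ofReal_mul, conj_mul_self]
  ring

lemma gram_conj (u : Fin n → κ → ℂ) (k k' : κ) :
    (starRingEnd ℂ) (gram u k k') = gram u k' k := by
  unfold gram
  simp only [Matrix.of_apply, map_sum, _root_.map_mul, Complex.conj_conj]
  exact Finset.sum_congr rfl fun a _ => by ring

lemma sigma_herm (u : Fin n → κ → ℂ) (c : ℝ) {σ : Mat ((Fin n × Fin n) × κ)}
    (hσ : ∀ p q, σ p q = (if p.1 = q.1 then 1 else 0) * ((c : ℂ) * gram u p.2 q.2)) :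
    σ.IsHermitian := by
  refine Matrix.ext fun p q => ?_
  rw [Matrix.conjTranspose_apply, hσ q p, hσ p q]
  rcases eq_or_ne p.1 q.1 with h | h
  · simp [h, RCLike.star_def, Complex.conj_ofReal, gram_conj]
  · simp [h, Ne.symm h]

lemma rho_herm (u : Fin n → κ → ℂ) (c : ℝ) {ρ : Mat ((Fin n × Fin n) × κ)}
    (hρ : ∀ p q, ρ p q = (c : ℂ) * (wv u p * (starRingEnd ℂ) (wv u q))) :
    ρ.IsHermitian := by
  refine Matrix.ext fun p q => ?_
  rw [Matrix.conjTranspose_apply, hρ q p, hρ p q]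
  simp only [RCLike.star_def, _root_.map_mul, Complex.conj_ofReal, Complex.conj_conj]
  ring

theorem master {u : Fin n → κ → ℂ} [NeZero n]
    (hu : Submodule.span ℂ (Set.range u) ≠ ⊥)
    {c : ℝ} (hc : 0 < c)
    {ρ σ : Mat ((Fin n × Fin n) × κ)}
    (hρ : ∀ p q, ρ p q = (c : ℂ) * (wv u p * (starRingEnd ℂ) (wv u q)))
    (hσ : ∀ p q, σ p q = (if p.1 = q.1 then 1 else 0) * ((c : ℂ) * gram u p.2 q.2)) :
    Dmax ρ σ = ((Real.logb 2
      ((Module.finrank ℂ (Submodule.span ℂ (Set.range u))) : ℝ) : ℝ) : EReal) := by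
  classical
  set Rc : ℕ := Module.finrank ℂ (Submodule.span ℂ (Set.range u)) with hRc
  have hRpos : 0 < Rc := by
    rw [hRc, Module.finrank_pos_iff]
    exact Submodule.nontrivial_iff_ne_bot.mpr hu
  have hRcard : Rc = Fintype.card {k // Gd u k ≠ 0} := rank_card u
  set rr : ℝ := (Rc : ℝ) with hrr
  have hrrpos : 0 < rr := by positivity
  -- the quadratic form of `l•σ - ρ`
  have hquad : ∀ (l : ℝ) (x : ((Fin n × Fin n) × κ) → ℂ),
      dotProduct (star x) ((((l : ℝ) : ℂ) • σ - ρ) *ᵥ x) =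
        ((l * (c * ∑ ia : Fin n × Fin n,
            ∑ a', Complex.normSq (inn (u a') (fun k => x (ia, k)))) -
          c * Complex.normSq (∑ a, inn (u a) (fun k => x ((a, a), k))) : ℝ) : ℂ) := by
    intro l x
    rw [Matrix.sub_mulVec, dotProduct_sub, Matrix.smul_mulVec, dotProduct_smul,
      sigma_quad u c hσ x, rho_quad u c hρ x]
    push_cast
    simp only [smul_eq_mul]
    try ring
  have hherm : ∀ l : ℝ, (((l : ℝ) : ℂ) • σ - ρ).IsHermitian := by
    intro l
    have h1 : σᴴ = σ := sigma_herm u c hσ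
    have h2 : ρᴴ = ρ := rho_herm u c hρ
    show (((l : ℝ) : ℂ) • σ - ρ)ᴴ = _
    rw [Matrix.conjTranspose_sub, Matrix.conjTranspose_smul, h1, h2, RCLike.star_def,
      Complex.conj_ofReal]
  -- direction 1
  have hdir1 : (((rr : ℝ) : ℂ) • σ - ρ).PosSemidef := by
    refine Matrix.PosSemidef.of_dotProduct_mulVec_nonneg (hherm rr) fun x => ?_
    rw [hquad rr x]
    rw [Complex.zero_le_real]
    have h1 := cs u (fun a k => x ((a, a), k))
    rw [← hRcard] at h1
    set B : Fin n × Fin n → ℝ :=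
      fun ia => ∑ a', Complex.normSq (inn (u a') (fun k => x (ia, k))) with hB
    have hBnn : ∀ ia, 0 ≤ B ia := fun ia =>
      Finset.sum_nonneg fun a' _ => Complex.normSq_nonneg _
    have h2 : ∑ a, B (a, a) ≤ ∑ ia : Fin n × Fin n, B ia := by
      have e1 : ∑ ia : Fin n × Fin n, (if ia.1 = ia.2 then B ia else 0) =
          ∑ a, B (a, a) := by
        rw [Fintype.sum_prod_type]
        refine Finset.sum_congr rfl fun i _ => ?_
        rw [Finset.sum_ite_eq Finset.univ i (fun a => B (i, a))]
        simp
      rw [← e1]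
      refine Finset.sum_le_sum fun ia _ => ?_
      split
      · exact le_refl _
      · exact hBnn ia
    have h3 : Complex.normSq (∑ a, inn (u a) (fun k => x ((a, a), k))) ≤
        rr * ∑ ia : Fin n × Fin n, B ia := by
      refine le_trans h1 ?_
      exact mul_le_mul_of_nonneg_left h2 (by positivity)
    nlinarith [hc, h3]
  -- direction 2
  have hdir2 : ∀ l : ℝ, 0 ≤ l → (((l : ℝ) : ℂ) • σ - ρ).PosSemidef → rr ≤ l := by
    intro l _ hpsd
    obtain ⟨z, hz1, hz2⟩ := testvec u
    set x0 : ((Fin n × Fin n) × κ) → ℂ :=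
      fun p => if p.1.1 = p.1.2 then z p.1.2 p.2 else 0 with hx0
    have hnn := hpsd.dotProduct_mulVec_nonneg x0
    rw [hquad l x0] at hnn
    rw [Complex.zero_le_real] at hnn
    have hsl : ∀ a : Fin n, (fun k => x0 ((a, a), k)) = z a := by
      intro a; funext k; simp [hx0]
    have hs : (∑ a, inn (u a) (fun k => x0 ((a, a), k))) = ((rr : ℝ) : ℂ) := by
      rw [Finset.sum_congr rfl fun a _ => by rw [hsl a]]
      rw [hz1, hrr, hRcard]
    have hSσ : ∑ ia : Fin n × Fin n,
        ∑ a', Complex.normSq (inn (u a') (fun k => x0 (ia, k))) = rr := by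
      have hoff : ∀ ia : Fin n × Fin n,
          (∑ a', Complex.normSq (inn (u a') (fun k => x0 (ia, k)))) =
            if ia.1 = ia.2 then
              ∑ a', Complex.normSq (inn (u a') (z ia.2)) else 0 := by
        intro ia
        rcases eq_or_ne ia.1 ia.2 with h | h
        · rw [if_pos h]
          refine Finset.sum_congr rfl fun a' _ => ?_
          congr 1
          congr 1
          funext k
          simp [hx0, h]
        · rw [if_neg h]
          refine Finset.sum_eq_zero fun a' _ => ?_
          have : (fun k => x0 (ia, k)) = fun _ => (0 : ℂ) := by
            funext k; simp [hx0, h]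
          rw [this]
          simp [inn]
      rw [Finset.sum_congr rfl fun ia _ => hoff ia]
      rw [Fintype.sum_prod_type]
      have e2 : ∀ i : Fin n, ∑ a : Fin n,
          (if i = a then ∑ a', Complex.normSq (inn (u a') (z a)) else 0) =
          ∑ a', Complex.normSq (inn (u a') (z i)) := by
        intro i
        rw [Finset.sum_ite_eq Finset.univ i
          (fun a => ∑ a', Complex.normSq (inn (u a') (z a)))]
        simp
      rw [Finset.sum_congr rfl fun i _ => e2 i]
      rw [hrr, hRcard]
      exact_mod_cast hz2
    rw [hs, hSσ] at hnn
    have hnsq : Complex.normSq ((rr : ℝ) : ℂ) = rr * rr := by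
      rw [Complex.normSq_ofReal]
    rw [hnsq] at hnn
    by_contra hlt
    push_neg at hlt
    have hcr : 0 < c * rr := mul_pos hc hrrpos
    have hmul : l * (c * rr) < rr * (c * rr) := mul_lt_mul_of_pos_right hlt hcr
    nlinarith
  -- compute the infimum
  have hset : Dmax ρ σ = sInf {x : EReal | ∃ l : ℝ, 0 ≤ l ∧
      ((l : ℂ) • σ - ρ).PosSemidef ∧ x = ((Real.logb 2 l : ℝ) : EReal)} := rfl
  rw [hset]
  apply le_antisymm
  · exact sInf_le ⟨rr, le_of_lt hrrpos, hdir1, rfl⟩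
  · refine le_sInf fun x hx => ?_
    obtain ⟨l, hl0, hpsd, rfl⟩ := hx
    have hge : rr ≤ l := hdir2 l hl0 hpsd
    have : Real.logb 2 rr ≤ Real.logb 2 l :=
      Real.logb_le_logb_of_le one_lt_two hrrpos hge
    exact_mod_cast EReal.coe_le_coe_iff.mpr this


lemma wgram (u : Fin n → κ → ℂ) (k k' : κ) :
    ∑ ia : Fin n × Fin n, wv u (ia, k) * (starRingEnd ℂ) (wv u (ia, k')) =
      gram u k k' := by
  rw [Fintype.sum_prod_type]
  have step : ∀ i a : Fin n, wv u ((i, a), k) * (starRingEnd ℂ) (wv u ((i, a), k')) =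
      if a = i then u a k * (starRingEnd ℂ) (u a k') else 0 := by
    intro i a
    unfold wv
    rcases eq_or_ne a i with h | h
    · subst h; simp
    · simp [h]
  rw [Finset.sum_congr rfl fun i _ => Finset.sum_congr rfl fun a _ => step i a]
  rw [Finset.sum_comm]
  rw [Finset.sum_congr rfl fun a _ => Finset.sum_ite_eq Finset.univ a
    (fun _ => u a k * (starRingEnd ℂ) (u a k'))]
  simp [gram]

end CtrlAux

open CtrlAux in

lemma conjMap_apply {ι κ' : Type} [Fintype ι] (W : Matrix κ' ι ℂ) (X : Mat ι) :
    conjMap W X = W * X * Wᴴ := rfl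

lemma sand {ι κ' : Type} [Fintype ι] [DecidableEq ι] (C : Matrix κ' ι ℂ) (i j : ι)
    (s t : κ') :
    (C * Matrix.single i j (1 : ℂ) * Cᴴ) s t = C s i * (starRingEnd ℂ) (C t j) := by
  rw [Matrix.mul_apply]
  have h1 : ∀ y, (C * Matrix.single i j (1:ℂ)) s y = if j = y then C s i else 0 := by
    intro y
    rw [Matrix.mul_apply]
    simp [Matrix.single, ite_and, Finset.sum_ite_eq, mul_comm]
  rw [Finset.sum_congr rfl fun y _ => by rw [h1 y]]
  simp only [ite_mul, zero_mul, Finset.sum_ite_eq, Finset.mem_univ, if_true]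
  rw [Matrix.conjTranspose_apply]
  simp [RCLike.star_def]


end CtrlAuxSection

open CtrlAux in
/-- For a controlled unitary `C_U = ∑ j, |j⟩⟨j| ⊗ U_j` on `ℂ^n ⊗ ℂ^m`
viewed as a bipartite channel `ρ ↦ C_U ρ C_Uᴴ`, the down-arrow conditional min-entropy of
its Choi state equals `−log₂ dim span{vec(U_j)}`. -/
theorem controlled_unitary_choi_condMinDown
    {n m : ℕ} [NeZero n] [NeZero m] (U : Fin n → Mat (Fin m))
    (hU : ∀ j, U j ∈ Matrix.unitaryGroup (Fin m) ℂ) :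
    condMinDown (biChoiState (conjMap (ctrlU U))) =
      (((-Real.logb 2
          ((Module.finrank ℂ (Submodule.span ℂ (Set.range fun j => vecRect (U j)))) : ℝ)) :
        ℝ) : EReal) := by

  classical
  set u : Fin n → (Fin m × Fin m) → ℂ := fun j => vecRect (U j) with husp
  set c : ℝ := (((n * m : ℕ) : ℝ))⁻¹ with hcdef
  have hcast : ((c : ℝ) : ℂ) = (((n * m : ℕ) : ℂ))⁻¹ := by
    rw [hcdef]; push_cast; ring
  have hc : 0 < c := by
    rw [hcdef]
    have : (0 : ℝ) < ((n * m : ℕ) : ℝ) := by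
      have := Nat.mul_pos (Nat.pos_of_ne_zero (NeZero.ne n)) (Nat.pos_of_ne_zero (NeZero.ne m))
      exact_mod_cast this
    exact inv_pos.mpr this
  set ρ : Mat ((Fin n × Fin n) × (Fin m × Fin m)) := biChoiState (conjMap (ctrlU U)) with hrho
  -- entries of ρ
  have hρ : ∀ p q, ρ p q = (c : ℂ) * (wv u p * (starRingEnd ℂ) (wv u q)) := by
    intro p q
    rw [hrho]
    show choiState (conjMap (ctrlU U)) ((p.1.1, p.2.1), (p.1.2, p.2.2))
      ((q.1.1, q.2.1), (q.1.2, q.2.2)) = _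
    rw [choiState, Matrix.smul_apply, smul_eq_mul]
    have hcard : (Fintype.card (Fin n × Fin m) : ℂ) = ((n * m : ℕ) : ℂ) := by
      simp [Fintype.card_prod]
    rw [hcard, ← hcast]
    congr 1
    have he : choiMatrix (conjMap (ctrlU U)) ((p.1.1, p.2.1), (p.1.2, p.2.2))
        ((q.1.1, q.2.1), (q.1.2, q.2.2)) =
        ((ctrlU U * Matrix.single (p.1.1, p.2.1) (q.1.1, q.2.1) (1 : ℂ) *
          (ctrlU U)ᴴ : Mat (Fin n × Fin m)))
          (p.1.2, p.2.2) (q.1.2, q.2.2) := rfl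
    rw [he, sand]
    rfl
  -- entries of σ
  have hσ : ∀ p q, ((1 : Mat (Fin n × Fin n)) ⊗ₖ trFst ρ) p q =
      (if p.1 = q.1 then 1 else 0) * ((c : ℂ) * gram u p.2 q.2) := by
    intro p q
    have htr : trFst ρ p.2 q.2 = (c : ℂ) * gram u p.2 q.2 := by
      show ∑ ia : Fin n × Fin n, ρ (ia, p.2) (ia, q.2) = _
      rw [Finset.sum_congr rfl fun ia _ => hρ (ia, p.2) (ia, q.2), ← Finset.mul_sum,
        wgram]
    show (1 : Mat (Fin n × Fin n)) p.1 q.1 * trFst ρ p.2 q.2 = _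
    rw [htr, Matrix.one_apply]
  -- nontrivial span
  have hu : Submodule.span ℂ (Set.range u) ≠ ⊥ := by
    intro hbot
    have hmem : u 0 ∈ Submodule.span ℂ (Set.range u) :=
      Submodule.subset_span (Set.mem_range_self 0)
    rw [hbot, Submodule.mem_bot] at hmem
    have hU0 : U 0 = 0 := by
      ext b j
      have := congrFun hmem (j, b)
      simpa [husp, vecRect] using this
    have h1 : star (U 0) * U 0 = 1 := Matrix.mem_unitaryGroup_iff'.mp (hU 0)
    rw [hU0] at h1
    simp at h1
  show -(Dmax ρ ((1 : Mat (Fin n × Fin n)) ⊗ₖ trFst ρ)) = _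
  rw [master hu hc hρ hσ]
  rw [← EReal.coe_neg]
end
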